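/- arXiv:1405.5753 — 2 statements merged into one kernel-verified Lean document; each statement's English description precedes it below -/
import Mathlib

section
/- Consider the discrete-time Markov chain X = (X_1, …, X_N) on ℤ_{≥0}^N modeling N parallel homogeneous queues with infinite buffers: every queue has the same strictly positive Poisson arrival rate λ > 0, and the state-dependent service rates μ_i : ℤ_{≥0}^N → (0, ∞) are bounded and permutation-equivariant (for every permutation σ of {1, …, N} and every state x, μ_{σ(i)}(x ∘ σ⁻¹) = μ_i(x)); from state x the chain jumps to x + e_i with probability λ / D(x) for each i, and to x − e_i with probability μ_i(x) / D(x) for each i with x_i > 0, where D(x) = N·λ + Σ_{i : x_i > 0} μ_i(x). If there exists an index i such that λ > limsup_{x_i → ∞} sup_{x_j : j ≠ i} μ_i(x), then, independently of the initial state, almost surely there exists a time T such that for all t ≥ T one has min_{1 ≤ i ≤ N} X_i(t) > 0 (i.e., the system is eventually saturated: every queue is nonempty from some time on). -/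
open MeasureTheory Filter Function

noncomputable section

/-- The set of backlogged queues (queues with at least one packet) in state `x`. -/
def backlogged {N : ℕ} (x : Fin N → ℕ) : Finset (Fin N) :=
  Finset.univ.filter fun i => 0 < x i

/-- The per-event normalizer `D(x) = ∑_j λ_j + ∑_{j : x_j > 0} μ_j(x)`. -/
def normalizer {N : ℕ} (lam : Fin N → ℝ) (mu : Fin N → (Fin N → ℕ) → ℝ)
    (x : Fin N → ℕ) : ℝ :=
  (∑ j, lam j) + ∑ j ∈ backlogged x, mu j x

/-- One-step transition probabilities of the system of queues: from `x` the chain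
jumps to `x + e_i` with probability `λ_i / D(x)`, and to `x - e_i` (when `x_i > 0`)
with probability `μ_i(x) / D(x)`; all other transitions have probability `0`. -/
def queueKernel {N : ℕ} (lam : Fin N → ℝ) (mu : Fin N → (Fin N → ℕ) → ℝ)
    (x y : Fin N → ℕ) : ℝ :=
  ((∑ i, if y = Function.update x i (x i + 1) then lam i else 0) +
      ∑ i, if 0 < x i ∧ y = Function.update x i (x i - 1) then mu i x else 0) /
    normalizer lam mu x

/-- `P` is the law on path space of a (time-homogeneous) Markov chain with one-step
transition probabilities `queueKernel lam mu`, stated via finite cylinder events. -/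
def IsQueueChain {N : ℕ} (lam : Fin N → ℝ) (mu : Fin N → (Fin N → ℕ) → ℝ)
    (P : Measure (ℕ → Fin N → ℕ)) : Prop :=
  ∀ (path : ℕ → Fin N → ℕ) (t : ℕ),
    P {ω | ∀ s ≤ t + 1, ω s = path s} =
      ENNReal.ofReal (queueKernel lam mu (path t) (path (t + 1))) *
        P {ω | ∀ s ≤ t, ω s = path s}

/-- `sup_{x_j : j ≠ i} μ_i(x)`: the supremum of `μ_i` over all states whose `i`-th
coordinate equals `n`. -/
def supAtLevel {N : ℕ} (mu : Fin N → (Fin N → ℕ) → ℝ) (i : Fin N) (n : ℕ) : ℝ :=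
  ⨆ x : {x : Fin N → ℕ // x i = n}, mu i x.1

namespace EvSat

open scoped ENNReal Classical

variable {N : ℕ}

abbrev St (N : ℕ) := Fin N → ℕ

def upm (l : Fin N) (x : St N) : St N := Function.update x l (x l + 1)
def dnm (l : Fin N) (x : St N) : St N := Function.update x l (x l - 1)

variable (lam : ℝ) (mu : Fin N → St N → ℝ)

def Dn (x : St N) : ℝ := normalizer (fun _ => lam) mu x

def Kk (x y : St N) : ℝ≥0∞ := ENNReal.ofReal (queueKernel (fun _ => lam) mu x y)

def Tf (x : St N) : Finset (St N) :=
  (Finset.univ.image (upm · x)) ∪ ((backlogged x).image (dnm · x))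

variable {lam mu}

lemma upm_apply_self (l : Fin N) (x : St N) : upm l x l = x l + 1 := by
  simp [upm]

lemma upm_apply_ne {l m : Fin N} (h : m ≠ l) (x : St N) : upm l x m = x m := by
  simp [upm, Function.update_of_ne h]

lemma dnm_apply_self (l : Fin N) (x : St N) : dnm l x l = x l - 1 := by
  simp [dnm]

lemma dnm_apply_ne {l m : Fin N} (h : m ≠ l) (x : St N) : dnm l x m = x m := by
  simp [dnm, Function.update_of_ne h]

lemma upm_inj {l m : Fin N} {x : St N} (h : upm l x = upm m x) : l = m := by
  by_contra hlm
  have h1 := congrFun h l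
  rw [upm_apply_self, upm_apply_ne (m := l) (fun he => hlm he)] at h1
  omega

lemma upm_ne_dnm {l m : Fin N} {x : St N} (hm : 0 < x m) : upm l x ≠ dnm m x := by
  intro h
  rcases eq_or_ne l m with rfl | hlm
  · have h1 := congrFun h l
    rw [upm_apply_self, dnm_apply_self] at h1; omega
  · have h1 := congrFun h m
    rw [upm_apply_ne (Ne.symm hlm), dnm_apply_self] at h1; omega

lemma dnm_inj {l m : Fin N} {x : St N} (hl : 0 < x l) (h : dnm l x = dnm m x) :
    l = m := by
  by_contra hlm
  have h1 := congrFun h l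
  rw [dnm_apply_self, dnm_apply_ne (m := l) (fun he => hlm he)] at h1
  omega

lemma sum_lam_fin (hN : 0 < N) : (∑ _j : Fin N, lam) = N * lam := by
  simp [Finset.sum_const, mul_comm]

lemma Dn_pos (hN : 0 < N) (hlam : 0 < lam) (hmu : ∀ l x, 0 < mu l x) (x : St N) :
    0 < Dn lam mu x := by
  have h1 : (0:ℝ) < ∑ _j : Fin N, lam := by
    rw [sum_lam_fin hN]; positivity
  have h2 : (0:ℝ) ≤ ∑ l ∈ backlogged x, mu l x :=
    Finset.sum_nonneg fun l _ => (hmu l x).le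
  unfold Dn normalizer; linarith

lemma Dn_le (hlam : 0 < lam) {B : ℝ} (hBlam : lam ≤ B) (hB0 : 0 ≤ B)
    (hB : ∀ l x, mu l x ≤ B) (x : St N) :
    Dn lam mu x ≤ N * (lam + B) := by
  have h1 : (∑ _j : Fin N, lam) = N * lam := by
    simp [Finset.sum_const, mul_comm]
  have h2 : ∑ l ∈ backlogged x, mu l x ≤ (backlogged x).card • B :=
    Finset.sum_le_card_nsmul _ _ _ fun l _ => hB l x
  have h3 : ((backlogged x).card : ℝ) ≤ N := by
    exact_mod_cast Nat.cast_le.2 (by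
      exact (Finset.card_le_univ (backlogged x)).trans_eq (Fintype.card_fin N))
  have h4 : ((backlogged x).card : ℝ) * B ≤ N * B :=
    mul_le_mul_of_nonneg_right h3 hB0
  unfold Dn normalizer
  rw [h1]
  have h5 : ((backlogged x).card) • B = ((backlogged x).card : ℝ) * B := by
    simp [nsmul_eq_mul]
  nlinarith


lemma K_off {x y : St N} (hy : y ∉ Tf x) : Kk lam mu x y = 0 := by
  unfold Kk queueKernel
  have h1 : (∑ i, if y = Function.update x i (x i + 1) then lam else 0) = 0 := by
    apply Finset.sum_eq_zero
    intro l _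
    rw [if_neg]
    intro h
    exact hy (Finset.mem_union_left _ (Finset.mem_image.2 ⟨l, Finset.mem_univ l, h.symm⟩))
  have h2 : (∑ i, if 0 < x i ∧ y = Function.update x i (x i - 1) then mu i x else 0) = 0 := by
    apply Finset.sum_eq_zero
    intro l _
    rw [if_neg]
    rintro ⟨hl, h⟩
    refine hy (Finset.mem_union_right _ (Finset.mem_image.2 ⟨l, ?_, h.symm⟩))
    simp [backlogged, hl]
  rw [h1, h2]
  simp

lemma K_up (x : St N) (l : Fin N) :
    Kk lam mu x (upm l x) = ENNReal.ofReal (lam / Dn lam mu x) := by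
  unfold Kk queueKernel
  have h1 : (∑ i, if upm l x = Function.update x i (x i + 1) then lam else 0) = lam := by
    rw [Finset.sum_eq_single l]
    · simp [upm]
    · intro m _ hml
      rw [if_neg]
      intro h
      exact hml (upm_inj (x := x) h).symm
    · simp
  have h2 : (∑ i, if 0 < x i ∧ upm l x = Function.update x i (x i - 1) then mu i x else 0)
      = 0 := by
    apply Finset.sum_eq_zero
    intro m _
    rw [if_neg]
    rintro ⟨hm, h⟩
    exact upm_ne_dnm hm h
  rw [h1, h2, add_zero]
  rfl

lemma K_dn (x : St N) {l : Fin N} (hl : 0 < x l) :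
    Kk lam mu x (dnm l x) = ENNReal.ofReal (mu l x / Dn lam mu x) := by
  unfold Kk queueKernel
  have h1 : (∑ i, if dnm l x = Function.update x i (x i + 1) then lam else 0) = 0 := by
    apply Finset.sum_eq_zero
    intro m _
    rw [if_neg]
    intro h
    exact upm_ne_dnm hl h.symm
  have h2 : (∑ i, if 0 < x i ∧ dnm l x = Function.update x i (x i - 1) then mu i x else 0)
      = mu l x := by
    rw [Finset.sum_eq_single l]
    · simp [dnm, hl]
    · intro m _ hml
      rw [if_neg]
      rintro ⟨hm, h⟩
      exact hml (dnm_inj hl (x := x) h).symm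
    · simp [hl, dnm]
  rw [h1, h2, zero_add]
  rfl

lemma Tf_disj (x : St N) :
    Disjoint (Finset.univ.image (upm · x)) ((backlogged x).image (dnm · x)) := by
  rw [Finset.disjoint_left]
  intro y hy1 hy2
  obtain ⟨l, _, hl⟩ := Finset.mem_image.1 hy1
  obtain ⟨m, hm, hmy⟩ := Finset.mem_image.1 hy2
  have hm0 : 0 < x m := by simpa [backlogged] using hm
  exact upm_ne_dnm hm0 (hl.trans hmy.symm)

lemma master (x : St N) (b : St N → ℝ≥0∞) :
    (∑' y : St N, Kk lam mu x y * b y) =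
      (∑ l : Fin N, Kk lam mu x (upm l x) * b (upm l x)) +
        ∑ l ∈ backlogged x, Kk lam mu x (dnm l x) * b (dnm l x) := by
  rw [tsum_eq_sum (s := Tf x) (fun y hy => by rw [K_off hy, zero_mul])]
  unfold Tf
  rw [Finset.sum_union (Tf_disj x)]
  congr 1
  · rw [Finset.sum_image (fun l _ m _ h => upm_inj h)]
  · rw [Finset.sum_image]
    intro l hl m hm h
    exact dnm_inj (by simpa [backlogged] using hl) h

lemma sum_K (hN : 0 < N) (hlam : 0 < lam) (hmu : ∀ l x, 0 < mu l x) (x : St N) :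
    (∑' y : St N, Kk lam mu x y) = 1 := by
  have hD := Dn_pos (lam := lam) (mu := mu) hN hlam hmu x
  have h0 : (∑' y : St N, Kk lam mu x y) = ∑' y : St N, Kk lam mu x y * 1 := by
    simp
  rw [h0, master]
  simp only [mul_one]
  have h1 : (∑ l : Fin N, Kk lam mu x (upm l x)) =
      ENNReal.ofReal (∑ _l : Fin N, lam / Dn lam mu x) := by
    rw [ENNReal.ofReal_sum_of_nonneg (fun l _ => by positivity)]
    exact Finset.sum_congr rfl fun l _ => K_up x l
  have h2 : (∑ l ∈ backlogged x, Kk lam mu x (dnm l x)) =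
      ENNReal.ofReal (∑ l ∈ backlogged x, mu l x / Dn lam mu x) := by
    rw [ENNReal.ofReal_sum_of_nonneg (fun l hl => by
      have := (hmu l x).le
      positivity)]
    refine Finset.sum_congr rfl fun l hl => K_dn x (by simpa [backlogged] using hl)
  rw [h1, h2, ← ENNReal.ofReal_add (by positivity) (by
    apply Finset.sum_nonneg
    intro l _
    have := (hmu l x).le
    positivity)]
  have h3 : (∑ _l : Fin N, lam / Dn lam mu x) + ∑ l ∈ backlogged x, mu l x / Dn lam mu x
      = 1 := by
    rw [Finset.sum_const, nsmul_eq_mul, ← Finset.sum_div, Finset.card_univ,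
      Fintype.card_fin, ← mul_div_assoc, ← add_div]
    rw [div_eq_one_iff_eq hD.ne']
    unfold Dn normalizer
    rw [sum_lam_fin hN]
  rw [h3, ENNReal.ofReal_one]


variable (lam mu) in
/-- Product of kernel weights along a path starting at `x`. -/
def wt (x : St N) : List (St N) → ℝ≥0∞
  | [] => 1
  | y :: w => Kk lam mu x y * wt y w

/-- `FH j w` : `w` is a path segment whose last state has empty queue `j` and all
earlier states have nonempty queue `j` (a "first hit" segment). -/
def FH (j : Fin N) : List (St N) → Prop
  | [] => False
  | y :: w => (y j = 0 ∧ w = []) ∨ (y j ≠ 0 ∧ FH j w)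

variable (lam mu) in
/-- Total weight of first-hit segments from `x` of length at most `k`. -/
def hseq (j : Fin N) (k : ℕ) (x : St N) : ℝ≥0∞ :=
  ∑' w : List (St N), if FH j w ∧ w.length ≤ k then wt lam mu x w else 0

variable (lam mu) in
/-- Total weight of first-hit segments from `x`. -/
def hh (j : Fin N) (x : St N) : ℝ≥0∞ :=
  ∑' w : List (St N), if FH j w then wt lam mu x w else 0

lemma hseq_zero (j : Fin N) (x : St N) : hseq lam mu j 0 x = 0 := by
  unfold hseq
  convert tsum_zero with w
  rw [if_neg]
  rintro ⟨h1, h2⟩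
  match w with
  | [] => exact h1
  | y :: w => simp at h2

def consEquiv : St N × List (St N) ≃ {w : List (St N) // w ≠ []} where
  toFun p := ⟨p.1 :: p.2, by simp⟩
  invFun w := (w.1.head w.2, w.1.tail)
  left_inv p := by simp
  right_inv w := by
    rcases w with ⟨w, hw⟩
    match w with
    | [] => exact absurd rfl hw
    | y :: w => simp

lemma tsum_list_split (f : List (St N) → ℝ≥0∞) (hnil : f [] = 0) :
    (∑' w : List (St N), f w) = ∑' y : St N, ∑' w : List (St N), f (y :: w) := by
  have h1 : (∑' w : List (St N), f w) = ∑' p : St N × List (St N), f (p.1 :: p.2) := by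
    refine tsum_eq_tsum_of_ne_zero_bij (fun p => p.1.1 :: p.1.2) ?_ ?_ (fun p => rfl)
    · rintro ⟨⟨y, w⟩, _⟩ ⟨⟨y', w'⟩, _⟩ h
      simp only [List.cons.injEq] at h
      simp [h.1, h.2]
    · intro w hw
      match w with
      | [] => exact absurd hnil hw
      | y :: w => exact ⟨⟨(y, w), hw⟩, rfl⟩
  rw [h1]
  exact ENNReal.tsum_prod (f := fun y w => f (y :: w))

lemma hseq_succ (j : Fin N) (k : ℕ) (x : St N) :
    hseq lam mu j (k + 1) x =
      ∑' y : St N, Kk lam mu x y * (if y j = 0 then 1 else hseq lam mu j k y) := by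
  unfold hseq
  rw [tsum_list_split _ (by rw [if_neg]; rintro ⟨h, _⟩; exact h)]
  congr 1
  funext y
  by_cases hy : y j = 0
  · rw [if_pos hy]
    rw [tsum_eq_single ([] : List (St N))]
    · rw [if_pos ⟨Or.inl ⟨hy, rfl⟩, by simp⟩]
      simp [wt]
    · intro w hw
      rw [if_neg]
      rintro ⟨h1, _⟩
      rcases h1 with ⟨_, h⟩ | ⟨h, _⟩
      · exact hw h
      · exact h hy
  · rw [if_neg hy]
    rw [← ENNReal.tsum_mul_left]
    congr 1
    funext w
    by_cases hw : FH j w ∧ w.length ≤ k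
    · rw [if_pos ⟨Or.inr ⟨hy, hw.1⟩, by simpa using hw.2⟩, if_pos hw]
      rfl
    · rw [if_neg, if_neg hw, mul_zero]
      rintro ⟨h1, h2⟩
      rcases h1 with ⟨h, _⟩ | ⟨_, h⟩
      · exact hy h
      · exact hw ⟨h, by simpa using h2⟩


/-- Real-valued Lyapunov function `ρ^(x j - n0)` with `ρ = c/λ`. -/
def phir (lam c : ℝ) (n0 : ℕ) (j : Fin N) (x : St N) : ℝ := (c / lam) ^ (x j - n0)

/-- Uniform lower bound on a single arrival probability. -/
def p0 (N : ℕ) (lam B : ℝ) : ℝ := lam / (N * (lam + B))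

/-- The bound `G n` on the total first-hit weight from a state with `x j = n`. -/
def Gf (N : ℕ) (lam c B : ℝ) (n0 n : ℕ) : ℝ :=
  1 - p0 N lam B ^ (n0 + 1 - n) * (1 - c / lam)

section Bounds

variable (hN : 0 < N) (hlam : 0 < lam) (hmu : ∀ l x, 0 < mu l x)
variable {B : ℝ} (hBlam : lam ≤ B) (hB0 : 0 < B) (hB : ∀ l x, mu l x ≤ B)
variable {j : Fin N} {c : ℝ} {n0 : ℕ} (hc : 0 < c) (hclam : c < lam)
variable (hcj : ∀ x : St N, n0 ≤ x j → mu j x ≤ c)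

include hN hlam hmu in
lemma hseq_le_one : ∀ (k : ℕ) (x : St N), hseq lam mu j k x ≤ 1 := by
  intro k
  induction k with
  | zero => intro x; rw [hseq_zero]; exact zero_le
  | succ k ih =>
    intro x
    rw [hseq_succ]
    calc (∑' y : St N, Kk lam mu x y * (if y j = 0 then 1 else hseq lam mu j k y))
        ≤ ∑' y : St N, Kk lam mu x y * 1 := by
          refine ENNReal.tsum_le_tsum fun y => mul_le_mul_right ?_ _
          by_cases hy : y j = 0
          · rw [if_pos hy]
          · rw [if_neg hy]; exact ih y
      _ = 1 := by
          simp only [mul_one]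
          exact sum_K hN hlam hmu x

include hN hlam hmu hBlam hB0 hB hc hclam hcj in
lemma ri1 {x : St N} (hx : n0 + 1 ≤ x j) :
    (∑ l : Fin N, (lam / Dn lam mu x) * phir lam c n0 j (upm l x)) +
      ∑ l ∈ backlogged x, (mu l x / Dn lam mu x) * phir lam c n0 j (dnm l x)
    ≤ phir lam c n0 j x := by
  have hD : 0 < Dn lam mu x := Dn_pos hN hlam hmu x
  set ρ : ℝ := c / lam with hρ
  have hρpos : 0 < ρ := div_pos hc hlam
  have hρ1 : ρ < 1 := (div_lt_one hlam).2 hclam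
  have hρlam : ρ * lam = c := div_mul_cancel₀ c hlam.ne'
  set e : ℝ := ρ ^ (x j - n0 - 1) with he_def
  have he : 0 ≤ e := pow_nonneg hρpos.le _
  have hjbk : j ∈ backlogged x := by simp [backlogged]; omega
  have hphix : phir lam c n0 j x = e * ρ := by
    unfold phir
    rw [show x j - n0 = (x j - n0 - 1) + 1 by omega, pow_succ]
  have hphiup : phir lam c n0 j (upm j x) = e * ρ * ρ := by
    unfold phir
    rw [upm_apply_self, show x j + 1 - n0 = ((x j - n0 - 1) + 1) + 1 by omega,
      pow_succ, pow_succ]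
  have hphidn : phir lam c n0 j (dnm j x) = e := by
    unfold phir
    rw [dnm_apply_self, show x j - 1 - n0 = x j - n0 - 1 by omega]
  have hupne : ∀ l : Fin N, l ≠ j → phir lam c n0 j (upm l x) = e * ρ := by
    intro l hl
    unfold phir
    rw [upm_apply_ne (fun h => hl h.symm), show x j - n0 = (x j - n0 - 1) + 1 by omega,
      pow_succ]
  have hdnne : ∀ l : Fin N, l ≠ j → phir lam c n0 j (dnm l x) = e * ρ := by
    intro l hl
    unfold phir
    rw [dnm_apply_ne (fun h => hl h.symm), show x j - n0 = (x j - n0 - 1) + 1 by omega,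
      pow_succ]
  rw [← Finset.add_sum_erase _ _ (Finset.mem_univ j),
    ← Finset.add_sum_erase _ _ hjbk]
  have hsum1 : (∑ l ∈ Finset.univ.erase j, (lam / Dn lam mu x) * phir lam c n0 j (upm l x)) =
      ∑ _l ∈ Finset.univ.erase j, (lam / Dn lam mu x) * (e * ρ) :=
    Finset.sum_congr rfl fun l hl => by rw [hupne l (Finset.ne_of_mem_erase hl)]
  have hsum2 : (∑ l ∈ (backlogged x).erase j, (mu l x / Dn lam mu x) * phir lam c n0 j (dnm l x)) =
      ∑ l ∈ (backlogged x).erase j, (mu l x / Dn lam mu x) * (e * ρ) :=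
    Finset.sum_congr rfl fun l hl => by rw [hdnne l (Finset.ne_of_mem_erase hl)]
  rw [hsum1, hsum2]
  rw [Finset.sum_const, Finset.card_erase_of_mem (Finset.mem_univ j), Finset.card_univ,
    Fintype.card_fin, nsmul_eq_mul, hphiup, hphidn, hphix]
  have hsum_mul : (∑ l ∈ (backlogged x).erase j, (mu l x / Dn lam mu x) * (e * ρ)) =
      (∑ l ∈ (backlogged x).erase j, mu l x) * (e * ρ) / Dn lam mu x := by
    rw [Finset.sum_mul, Finset.sum_div]
    exact Finset.sum_congr rfl fun l _ => by ring
  rw [hsum_mul]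
  set Sd : ℝ := ∑ l ∈ (backlogged x).erase j, mu l x with hSd_def
  have hSd : 0 ≤ Sd := Finset.sum_nonneg fun l _ => (hmu l x).le
  have hDeq : Dn lam mu x = N * lam + (mu j x + Sd) := by
    unfold Dn normalizer
    rw [sum_lam_fin hN, ← Finset.add_sum_erase _ _ hjbk]
  have hNcast : ((N - 1 : ℕ) : ℝ) = (N : ℝ) - 1 := by
    have : (1:ℕ) ≤ N := hN
    push_cast [Nat.cast_sub this]
    ring
  rw [hNcast]
  have hmuj : mu j x ≤ ρ * lam := by rw [hρlam]; exact hcj x (by omega)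
  have hN1 : (1:ℝ) ≤ (N:ℝ) := by exact_mod_cast hN
  have key : lam * (e * ρ * ρ) + ((N:ℝ) - 1) * (lam * (e * ρ)) +
      (mu j x * e + Sd * (e * ρ)) ≤ Dn lam mu x * (e * ρ) := by
    rw [hDeq]
    nlinarith [mul_nonneg (mul_nonneg he (sub_nonneg.2 hρ1.le)) (sub_nonneg.2 hmuj),
      mul_nonneg he hρpos.le]
  calc (lam / Dn lam mu x) * (e * ρ * ρ) + ((N:ℝ) - 1) * ((lam / Dn lam mu x) * (e * ρ)) +
        ((mu j x / Dn lam mu x) * e + Sd * (e * ρ) / Dn lam mu x)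
      = (lam * (e * ρ * ρ) + ((N:ℝ) - 1) * (lam * (e * ρ)) +
          (mu j x * e + Sd * (e * ρ))) / Dn lam mu x := by ring
    _ ≤ (Dn lam mu x * (e * ρ)) / Dn lam mu x := by gcongr
    _ = e * ρ := mul_div_cancel_left₀ _ hD.ne'

include hN hlam hmu hBlam hB0 hB hc hclam hcj in
lemma hseq_le_phi : ∀ (k : ℕ) (x : St N),
    hseq lam mu j k x ≤ ENNReal.ofReal (phir lam c n0 j x) := by
  intro k
  induction k with
  | zero => intro x; rw [hseq_zero]; exact zero_le
  | succ k ih =>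
    intro x
    by_cases hx : x j ≤ n0
    · have h1 : phir lam c n0 j x = 1 := by
        unfold phir
        rw [show x j - n0 = 0 by omega, pow_zero]
      rw [h1, ENNReal.ofReal_one]
      exact hseq_le_one hN hlam hmu _ x
    · push_neg at hx
      rw [hseq_succ]
      have hb : ∀ y : St N, (if y j = 0 then 1 else hseq lam mu j k y) ≤
          ENNReal.ofReal (phir lam c n0 j y) := by
        intro y
        by_cases hy : y j = 0
        · rw [if_pos hy]
          have : phir lam c n0 j y = 1 := by
            unfold phir
            rw [hy, Nat.zero_sub, pow_zero]
          rw [this, ENNReal.ofReal_one]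
        · rw [if_neg hy]; exact ih y
      calc (∑' y : St N, Kk lam mu x y * (if y j = 0 then 1 else hseq lam mu j k y))
          ≤ ∑' y : St N, Kk lam mu x y * ENNReal.ofReal (phir lam c n0 j y) :=
            ENNReal.tsum_le_tsum fun y => mul_le_mul_right (hb y) _
        _ = (∑ l : Fin N, Kk lam mu x (upm l x) * ENNReal.ofReal (phir lam c n0 j (upm l x))) +
              ∑ l ∈ backlogged x, Kk lam mu x (dnm l x) *
                ENNReal.ofReal (phir lam c n0 j (dnm l x)) := master x _
        _ ≤ ENNReal.ofReal (phir lam c n0 j x) := by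
            have hD : 0 < Dn lam mu x := Dn_pos hN hlam hmu x
            have h1 : (∑ l : Fin N, Kk lam mu x (upm l x) *
                ENNReal.ofReal (phir lam c n0 j (upm l x))) =
                ENNReal.ofReal (∑ l : Fin N, (lam / Dn lam mu x) * phir lam c n0 j (upm l x)) := by
              rw [ENNReal.ofReal_sum_of_nonneg (fun l _ => by
                have : (0:ℝ) ≤ phir lam c n0 j (upm l x) := by
                  unfold phir; positivity
                positivity)]
              refine Finset.sum_congr rfl fun l _ => ?_
              rw [K_up, ← ENNReal.ofReal_mul (by positivity)]
            have h2 : (∑ l ∈ backlogged x, Kk lam mu x (dnm l x) *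
                ENNReal.ofReal (phir lam c n0 j (dnm l x))) =
                ENNReal.ofReal (∑ l ∈ backlogged x,
                  (mu l x / Dn lam mu x) * phir lam c n0 j (dnm l x)) := by
              rw [ENNReal.ofReal_sum_of_nonneg (fun l hl => by
                have h3 : (0:ℝ) ≤ phir lam c n0 j (dnm l x) := by
                  unfold phir; positivity
                have := (hmu l x).le
                positivity)]
              refine Finset.sum_congr rfl fun l hl => ?_
              rw [K_dn x (by simpa [backlogged] using hl),
                ← ENNReal.ofReal_mul (by
                  have := (hmu l x).le
                  positivity)]
            rw [h1, h2, ← ENNReal.ofReal_add (Finset.sum_nonneg fun l _ => by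
                have : (0:ℝ) ≤ phir lam c n0 j (upm l x) := by unfold phir; positivity
                positivity)
              (Finset.sum_nonneg fun l hl => by
                have h3 : (0:ℝ) ≤ phir lam c n0 j (dnm l x) := by unfold phir; positivity
                have := (hmu l x).le
                positivity)]
            exact ENNReal.ofReal_le_ofReal
              (ri1 hN hlam hmu hBlam hB0 hB hc hclam hcj (by omega))

include hN hlam hB0 hBlam in
lemma p0_le_one : p0 N lam B ≤ 1 := by
  have hN1 : (1:ℝ) ≤ (N:ℝ) := by exact_mod_cast hN
  have hNB : (0:ℝ) < N * (lam + B) := by nlinarith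
  rw [p0, div_le_one hNB]
  nlinarith

include hN hlam hB0 hBlam hc hclam in
lemma Gf_nonneg (n : ℕ) : 0 ≤ Gf N lam c B n0 n := by
  have hN1 : (1:ℝ) ≤ (N:ℝ) := by exact_mod_cast hN
  have hNB : (0:ℝ) < N * (lam + B) := by nlinarith
  have hp0 : 0 ≤ p0 N lam B := (div_pos hlam hNB).le
  have h1 : p0 N lam B ^ (n0 + 1 - n) ≤ 1 :=
    pow_le_one₀ hp0 (p0_le_one hN hlam hBlam hB0)
  have hα : 0 ≤ 1 - c / lam := by
    have : c / lam < 1 := (div_lt_one hlam).2 hclam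
    linarith
  have hα1 : 1 - c / lam ≤ 1 := by
    have : 0 < c / lam := div_pos hc hlam
    linarith
  have := mul_le_one₀ h1 hα hα1
  unfold Gf
  linarith

include hN hlam hmu hBlam hB0 hB hc hclam hcj in
lemma ri2 {x : St N} (hx : x j ≤ n0) :
    (lam / Dn lam mu x) * Gf N lam c B n0 (x j + 1) +
      ((N - 1 : ℕ) : ℝ) * (lam / Dn lam mu x) +
      (∑ l ∈ backlogged x, mu l x) / Dn lam mu x ≤ Gf N lam c B n0 (x j) := by
  have hD : 0 < Dn lam mu x := Dn_pos hN hlam hmu x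
  have hDle : Dn lam mu x ≤ N * (lam + B) := Dn_le hlam hBlam hB0.le hB x
  have hN1 : (1:ℝ) ≤ (N:ℝ) := by exact_mod_cast hN
  have hNB : (0:ℝ) < N * (lam + B) := by nlinarith
  have hp0 : 0 < p0 N lam B := div_pos hlam hNB
  have hp0D : p0 N lam B * Dn lam mu x ≤ lam := by
    have h1 : p0 N lam B * (N * (lam + B)) = lam := div_mul_cancel₀ _ hNB.ne'
    nlinarith [hp0.le]
  have hSm : (0:ℝ) ≤ ∑ l ∈ backlogged x, mu l x :=
    Finset.sum_nonneg fun l _ => (hmu l x).le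
  set Sm : ℝ := ∑ l ∈ backlogged x, mu l x with hSm_def
  have hDeq : Dn lam mu x = N * lam + Sm := by
    unfold Dn normalizer
    rw [sum_lam_fin hN]
  set q : ℝ := p0 N lam B ^ (n0 - x j) with hq_def
  have hq : 0 ≤ q := pow_nonneg hp0.le _
  have hα : (0:ℝ) ≤ 1 - c / lam := by
    have : c / lam < 1 := (div_lt_one hlam).2 hclam
    linarith
  have hG1 : Gf N lam c B n0 (x j + 1) = 1 - q * (1 - c / lam) := by
    unfold Gf
    rw [show n0 + 1 - (x j + 1) = n0 - x j by omega]
  have hG0 : Gf N lam c B n0 (x j) = 1 - q * p0 N lam B * (1 - c / lam) := by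
    unfold Gf
    rw [show n0 + 1 - x j = (n0 - x j) + 1 by omega, pow_succ]
  have hNcast : ((N - 1 : ℕ) : ℝ) = (N : ℝ) - 1 := by
    have : (1:ℕ) ≤ N := hN
    push_cast [Nat.cast_sub this]
    ring
  rw [hG1, hG0, hNcast]
  have key : lam * (1 - q * (1 - c / lam)) + ((N:ℝ) - 1) * lam + Sm ≤
      Dn lam mu x * (1 - q * p0 N lam B * (1 - c / lam)) := by
    have h2 : p0 N lam B * Dn lam mu x * (q * (1 - c / lam)) ≤
        lam * (q * (1 - c / lam)) :=
      mul_le_mul_of_nonneg_right hp0D (mul_nonneg hq hα)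
    nlinarith [hDeq]
  calc (lam / Dn lam mu x) * (1 - q * (1 - c / lam)) + ((N:ℝ) - 1) * (lam / Dn lam mu x) +
        Sm / Dn lam mu x
      = (lam * (1 - q * (1 - c / lam)) + ((N:ℝ) - 1) * lam + Sm) / Dn lam mu x := by ring
    _ ≤ (Dn lam mu x * (1 - q * p0 N lam B * (1 - c / lam))) / Dn lam mu x := by gcongr
    _ = 1 - q * p0 N lam B * (1 - c / lam) := mul_div_cancel_left₀ _ hD.ne'

include hN hlam hmu hBlam hB0 hB hc hclam hcj in
lemma hseq_le_G : ∀ (k : ℕ) (x : St N),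
    hseq lam mu j k x ≤ ENNReal.ofReal (Gf N lam c B n0 (x j)) := by
  intro k
  induction k with
  | zero => intro x; rw [hseq_zero]; exact zero_le
  | succ k ih =>
    intro x
    by_cases hx : x j ≤ n0
    · rw [hseq_succ]
      have hu : (upm j x) j = x j + 1 := upm_apply_self j x
      have hb : ∀ y : St N, (if y j = 0 then 1 else hseq lam mu j k y) ≤
          (if y = upm j x then ENNReal.ofReal (Gf N lam c B n0 (x j + 1)) else 1) := by
        intro y
        by_cases hyu : y = upm j x
        · rw [if_pos hyu, hyu, if_neg (by omega : ¬ (upm j x) j = 0)]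
          have := ih (upm j x)
          rwa [hu] at this
        · rw [if_neg hyu]
          by_cases hy : y j = 0
          · rw [if_pos hy]
          · rw [if_neg hy]; exact hseq_le_one hN hlam hmu k y
      calc (∑' y : St N, Kk lam mu x y * (if y j = 0 then 1 else hseq lam mu j k y))
          ≤ ∑' y : St N, Kk lam mu x y *
              (if y = upm j x then ENNReal.ofReal (Gf N lam c B n0 (x j + 1)) else 1) :=
            ENNReal.tsum_le_tsum fun y => mul_le_mul_right (hb y) _
        _ = (∑ l : Fin N, Kk lam mu x (upm l x) *
              (if upm l x = upm j x then ENNReal.ofReal (Gf N lam c B n0 (x j + 1)) else 1)) +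
            ∑ l ∈ backlogged x, Kk lam mu x (dnm l x) *
              (if dnm l x = upm j x then ENNReal.ofReal (Gf N lam c B n0 (x j + 1)) else 1) :=
            master x _
        _ ≤ ENNReal.ofReal (Gf N lam c B n0 (x j)) := by
            have hD : 0 < Dn lam mu x := Dn_pos hN hlam hmu x
            have hG1nn : 0 ≤ Gf N lam c B n0 (x j + 1) :=
              Gf_nonneg hN hlam hBlam hB0 hc hclam _
            rw [← Finset.add_sum_erase _ _ (Finset.mem_univ j)]
            have e1 : Kk lam mu x (upm j x) *
                (if upm j x = upm j x then ENNReal.ofReal (Gf N lam c B n0 (x j + 1)) else 1) =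
                ENNReal.ofReal ((lam / Dn lam mu x) * Gf N lam c B n0 (x j + 1)) := by
              rw [if_pos rfl, K_up, ← ENNReal.ofReal_mul (div_nonneg hlam.le hD.le)]
            have e2 : (∑ l ∈ Finset.univ.erase j, Kk lam mu x (upm l x) *
                (if upm l x = upm j x then ENNReal.ofReal (Gf N lam c B n0 (x j + 1)) else 1)) =
                ENNReal.ofReal (((N - 1 : ℕ) : ℝ) * (lam / Dn lam mu x)) := by
              have : ∀ l ∈ Finset.univ.erase j, Kk lam mu x (upm l x) *
                  (if upm l x = upm j x then ENNReal.ofReal (Gf N lam c B n0 (x j + 1)) else 1) =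
                  ENNReal.ofReal (lam / Dn lam mu x) := by
                intro l hl
                rw [if_neg (fun h => Finset.ne_of_mem_erase hl (upm_inj h)), mul_one, K_up]
              rw [Finset.sum_congr rfl this, Finset.sum_const,
                Finset.card_erase_of_mem (Finset.mem_univ j), Finset.card_univ,
                Fintype.card_fin, nsmul_eq_mul, ← ENNReal.ofReal_natCast (N - 1),
                ← ENNReal.ofReal_mul (Nat.cast_nonneg _)]
            have e3 : (∑ l ∈ backlogged x, Kk lam mu x (dnm l x) *
                (if dnm l x = upm j x then ENNReal.ofReal (Gf N lam c B n0 (x j + 1)) else 1)) =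
                ENNReal.ofReal ((∑ l ∈ backlogged x, mu l x) / Dn lam mu x) := by
              have : ∀ l ∈ backlogged x, Kk lam mu x (dnm l x) *
                  (if dnm l x = upm j x then ENNReal.ofReal (Gf N lam c B n0 (x j + 1)) else 1) =
                  ENNReal.ofReal (mu l x / Dn lam mu x) := by
                intro l hl
                have hl0 : 0 < x l := by simpa [backlogged] using hl
                rw [if_neg (fun h => upm_ne_dnm hl0 h.symm), mul_one, K_dn x hl0]
              rw [Finset.sum_congr rfl this, ← ENNReal.ofReal_sum_of_nonneg (fun l hl => by
                  have := (hmu l x).le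
                  positivity), Finset.sum_div]
            have hSm : (0:ℝ) ≤ ∑ l ∈ backlogged x, mu l x :=
              Finset.sum_nonneg fun l _ => (hmu l x).le
            rw [e1, e2, e3,
              ← ENNReal.ofReal_add
                (mul_nonneg (div_nonneg hlam.le hD.le) hG1nn)
                (mul_nonneg (Nat.cast_nonneg _) (div_nonneg hlam.le hD.le)),
              ← ENNReal.ofReal_add
                (add_nonneg (mul_nonneg (div_nonneg hlam.le hD.le) hG1nn)
                  (mul_nonneg (Nat.cast_nonneg _) (div_nonneg hlam.le hD.le)))
                (div_nonneg hSm hD.le)]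
            exact ENNReal.ofReal_le_ofReal (ri2 hN hlam hmu hBlam hB0 hB hc hclam hcj hx)
    · push_neg at hx
      calc hseq lam mu j (k+1) x ≤ ENNReal.ofReal (phir lam c n0 j x) :=
            hseq_le_phi hN hlam hmu hBlam hB0 hB hc hclam hcj (k+1) x
        _ ≤ ENNReal.ofReal (Gf N lam c B n0 (x j)) := by
            apply ENNReal.ofReal_le_ofReal
            unfold phir Gf
            rw [show n0 + 1 - x j = 0 by omega, pow_zero, one_mul]
            have hρpos : 0 < c / lam := div_pos hc hlam
            have hρ1 : c / lam < 1 := (div_lt_one hlam).2 hclam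
            have h1 : (c / lam) ^ (x j - n0) ≤ (c / lam) ^ 1 :=
              pow_le_pow_of_le_one hρpos.le hρ1.le (by omega)
            rw [pow_one] at h1
            linarith

include hN hlam hmu hBlam hB0 hB hc hclam hcj in
lemma hh_le_G (x : St N) :
    hh lam mu j x ≤ ENNReal.ofReal (Gf N lam c B n0 (x j)) := by
  unfold hh
  rw [ENNReal.tsum_eq_iSup_sum]
  refine iSup_le fun s => ?_
  set k := s.sup List.length with hk
  calc (∑ w ∈ s, if FH j w then wt lam mu x w else 0)
      ≤ ∑ w ∈ s, (if FH j w ∧ w.length ≤ k then wt lam mu x w else 0) := by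
        refine Finset.sum_le_sum fun w hw => ?_
        by_cases hFH : FH j w
        · rw [if_pos hFH, if_pos ⟨hFH, Finset.le_sup hw⟩]
        · rw [if_neg hFH, if_neg (fun h => hFH h.1)]
    _ ≤ hseq lam mu j k x := ENNReal.sum_le_tsum s
    _ ≤ ENNReal.ofReal (Gf N lam c B n0 (x j)) :=
        hseq_le_G hN hlam hmu hBlam hB0 hB hc hclam hcj k x

end Bounds


section Meas

def zSt : St N := fun _ => 0

/-- The cylinder event determined by a finite path `p` (states at times `0,…,len-1`). -/
def Cy (p : List (St N)) : Set (ℕ → St N) :=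
  {ω | ∀ s, s < p.length → ω s = p.getD s zSt}

instance : MeasurableSingletonClass (St N) := inferInstance

lemma measurable_Cy (p : List (St N)) : MeasurableSet (Cy p) := by
  have : Cy p = ⋂ (s : ℕ) (_ : s < p.length), (fun ω : ℕ → St N => ω s) ⁻¹' {p.getD s zSt} := by
    ext ω
    simp [Cy, Set.mem_iInter]
  rw [this]
  exact MeasurableSet.iInter fun s => MeasurableSet.iInter fun _ =>
    (measurable_pi_apply s) (measurableSet_singleton _)

variable {P : Measure (ℕ → St N)}

lemma P_cy_snoc (hchain : IsQueueChain (fun _ => lam) mu P)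
    (p : List (St N)) (hp : p ≠ []) (y : St N) :
    P (Cy (p ++ [y])) = Kk lam mu (p.getLast hp) y * P (Cy p) := by
  have hlen : 1 ≤ p.length := List.length_pos_iff.2 hp
  have h := hchain (fun s => (p ++ [y]).getD s zSt) (p.length - 1)
  have e1 : {ω : ℕ → St N | ∀ s ≤ p.length - 1 + 1, ω s = (p ++ [y]).getD s zSt} =
      Cy (p ++ [y]) := by
    ext ω
    simp only [Set.mem_setOf_eq, Cy, List.length_append, List.length_singleton]
    constructor
    · intro hω s hs
      exact hω s (by omega)
    · intro hω s hs
      exact hω s (by omega)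
  have e2 : {ω : ℕ → St N | ∀ s ≤ p.length - 1, ω s = (p ++ [y]).getD s zSt} = Cy p := by
    ext ω
    simp only [Set.mem_setOf_eq, Cy]
    constructor
    · intro hω s hs
      rw [← List.getD_append p [y] zSt s hs]
      exact hω s (by omega)
    · intro hω s hs
      rw [List.getD_append p [y] zSt s (by omega)]
      exact hω s (by omega)
  have e3 : (p ++ [y]).getD (p.length - 1 + 1) zSt = y := by
    rw [show p.length - 1 + 1 = p.length by omega,
      List.getD_append_right p [y] zSt p.length le_rfl]
    simp
  have e4 : (p ++ [y]).getD (p.length - 1) zSt = p.getLast hp := by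
    rw [List.getD_append p [y] zSt _ (by omega), List.getD_eq_getElem p zSt (by omega)]
    exact (List.getLast_eq_getElem hp).symm
  rw [e1, e2, e3, e4] at h
  exact h

lemma P_cy_append (hchain : IsQueueChain (fun _ => lam) mu P) :
    ∀ (w : List (St N)) (p : List (St N)) (hp : p ≠ []),
      P (Cy (p ++ w)) = P (Cy p) * wt lam mu (p.getLast hp) w := by
  intro w
  induction w with
  | nil => intro p hp; simp [wt]
  | cons y w ih =>
    intro p hp
    have h1 : p ++ y :: w = (p ++ [y]) ++ w := by simp
    have h2 : (p ++ [y]) ≠ [] := by simp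
    rw [h1, ih (p ++ [y]) h2]
    have h3 : (p ++ [y]).getLast h2 = y := List.getLast_append _
    rw [h3, P_cy_snoc hchain p hp y,
      show wt lam mu (p.getLast hp) (y :: w) = Kk lam mu (p.getLast hp) y * wt lam mu y w
        from rfl]
    ring

end Meas

lemma FH_ne_nil {j : Fin N} {w : List (St N)} (h : FH j w) : w ≠ [] := by
  match w with
  | [] => exact absurd h (by simp [FH])
  | y :: w => simp

lemma FH_getD_last {j : Fin N} : ∀ {w : List (St N)}, FH j w →
    (w.getD (w.length - 1) zSt) j = 0 := by
  intro w
  induction w with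
  | nil => intro h; exact absurd h (by simp [FH])
  | cons y w ih =>
    intro h
    rcases h with ⟨hy, rfl⟩ | ⟨hy, hFH⟩
    · simpa using hy
    · have hw : w ≠ [] := FH_ne_nil hFH
      have hlen : 1 ≤ w.length := List.length_pos_iff.2 hw
      rw [show (y :: w).length - 1 = (w.length - 1) + 1 by simp; omega,
        List.getD_cons_succ]
      exact ih hFH

lemma FH_getD_mid {j : Fin N} : ∀ {w : List (St N)}, FH j w →
    ∀ {s : ℕ}, s < w.length - 1 → (w.getD s zSt) j ≠ 0 := by
  intro w
  induction w with
  | nil => intro h; exact absurd h (by simp [FH])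
  | cons y w ih =>
    intro h s hs
    rcases h with ⟨hy, rfl⟩ | ⟨hy, hFH⟩
    · simp at hs
    · have hw : w ≠ [] := FH_ne_nil hFH
      have hlen : 1 ≤ w.length := List.length_pos_iff.2 hw
      match s with
      | 0 => simpa using hy
      | s + 1 =>
        rw [List.getD_cons_succ]
        exact ih hFH (by simp at hs; omega)

lemma FH_intro {j : Fin N} : ∀ {w : List (St N)}, w ≠ [] →
    (w.getD (w.length - 1) zSt) j = 0 →
    (∀ s, s < w.length - 1 → (w.getD s zSt) j ≠ 0) → FH j w := by
  intro w
  induction w with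
  | nil => intro h; exact absurd rfl h
  | cons y w ih =>
    intro _ hlast hmid
    by_cases hw : w = []
    · subst hw
      exact Or.inl ⟨by simpa using hlast, rfl⟩
    · have hlen : 1 ≤ w.length := List.length_pos_iff.2 hw
      refine Or.inr ⟨hmid 0 (by simp; omega), ih hw ?_ ?_⟩
      · have := hlast
        rwa [show (y :: w).length - 1 = (w.length - 1) + 1 by simp; omega,
          List.getD_cons_succ] at this
      · intro s hs
        have := hmid (s + 1) (by simp; omega)
        rwa [List.getD_cons_succ] at this

/-- Paths ending exactly at their `k`-th visit (at a time `≥ 1`) to `{x j = 0}`. -/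
inductive Fk (j : Fin N) : ℕ → List (St N) → Prop where
  | base (x : St N) (w : List (St N)) (hw : FH j w) : Fk j 1 (x :: w)
  | step {k : ℕ} (p w : List (St N)) (hp : Fk j k p) (hw : FH j w) : Fk j (k + 1) (p ++ w)

lemma Fk_pos {j : Fin N} {k : ℕ} {p : List (St N)} (h : Fk j k p) : 1 ≤ k := by
  induction h with
  | base => exact le_rfl
  | step _ _ _ _ ih => omega

lemma Fk_ne_nil {j : Fin N} {k : ℕ} {p : List (St N)} (h : Fk j k p) : p ≠ [] := by
  induction h with
  | base x w hw => simp
  | step p w hp hw ih =>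
    have := FH_ne_nil hw
    simp [List.append_eq_nil_iff]
    intro _ h
    exact this h

lemma Fk_len {j : Fin N} {k : ℕ} {p : List (St N)} (h : Fk j k p) : 2 ≤ p.length := by
  induction h with
  | base x w hw =>
    have := List.length_pos_iff.2 (FH_ne_nil hw)
    simp
    omega
  | step p w hp hw ih =>
    have := List.length_pos_iff.2 (FH_ne_nil hw)
    simp
    omega

lemma Fk_getD_last {j : Fin N} {k : ℕ} {p : List (St N)} (h : Fk j k p) :
    (p.getD (p.length - 1) zSt) j = 0 := by
  induction h with
  | base x w hw =>
    have hlen : 1 ≤ w.length := List.length_pos_iff.2 (FH_ne_nil hw)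
    rw [show (x :: w).length - 1 = (w.length - 1) + 1 by simp; omega,
      List.getD_cons_succ]
    exact FH_getD_last hw
  | step p w hp hw ih =>
    have hlen : 1 ≤ w.length := List.length_pos_iff.2 (FH_ne_nil hw)
    rw [show (p ++ w).length - 1 = p.length + (w.length - 1) by simp; omega,
      List.getD_append_right p w zSt _ (by omega),
      show p.length + (w.length - 1) - p.length = w.length - 1 by omega]
    exact FH_getD_last hw

lemma Fk_one_mid {j : Fin N} {p : List (St N)} (h : Fk j 1 p) :
    ∀ s, 1 ≤ s → s < p.length - 1 → (p.getD s zSt) j ≠ 0 := by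
  cases h with
  | base x w hw =>
    intro s hs1 hs2
    match s, hs1 with
    | s + 1, _ =>
      rw [List.getD_cons_succ]
      exact FH_getD_mid hw (by simp at hs2; omega)
  | step p w hp hw =>
    exact absurd (Fk_pos hp) (by omega)

lemma Fk_succ_elim {j : Fin N} {k : ℕ} (hk : 1 ≤ k) {p : List (St N)}
    (h : Fk j (k + 1) p) : ∃ q w, Fk j k q ∧ FH j w ∧ p = q ++ w := by
  cases h with
  | base x w hw => omega
  | step q w hq hw => exact ⟨q, w, hq, hw, rfl⟩

lemma getD_map_range (f : ℕ → St N) {n s : ℕ} (h : s < n) :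
    ((List.range n).map f).getD s zSt = f s := by
  have h1 : s < ((List.range n).map f).length := by simpa using h
  rw [List.getD_eq_getElem _ _ h1]
  simp


section Decomp

variable (hN : 0 < N) (hlam : 0 < lam) (hmu : ∀ l x, 0 < mu l x)
variable {B : ℝ} (hBlam : lam ≤ B) (hB0 : 0 < B) (hB : ∀ l x, mu l x ≤ B)
variable {j : Fin N} {c : ℝ} {n0 : ℕ} (hc : 0 < c) (hclam : c < lam)
variable (hcj : ∀ x : St N, n0 ≤ x j → mu j x ≤ c)
variable {P : Measure (ℕ → St N)} [IsProbabilityMeasure P]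
variable (hchain : IsQueueChain (fun _ => lam) mu P)

lemma Cy_agree {p : List (St N)} {ω : ℕ → St N} (h : ω ∈ Cy p) :
    ∀ s, s < p.length → p.getD s zSt = ω s := fun s hs => (h s hs).symm

lemma F1_disjoint_aux {p p' : List (St N)} (h : Fk j 1 p) (h' : Fk j 1 p')
    (hle : p.length ≤ p'.length) {ω : ℕ → St N} (hω : ω ∈ Cy p) (hω' : ω ∈ Cy p') :
    p = p' := by
  rcases eq_or_lt_of_le hle with heq | hlt
  · refine List.ext_get heq fun n h1 h2 => ?_
    rw [← List.getD_eq_get p zSt ⟨n, h1⟩, ← List.getD_eq_get p' zSt ⟨n, h2⟩,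
      Cy_agree hω n h1, Cy_agree hω' n (by omega)]
  · exfalso
    have h2 := Fk_len h
    have hlast : (p.getD (p.length - 1) zSt) j = 0 := Fk_getD_last h
    have hmid : (p'.getD (p.length - 1) zSt) j ≠ 0 :=
      Fk_one_mid h' (p.length - 1) (by omega) (by omega)
    rw [Cy_agree hω _ (by omega), ← Cy_agree hω' _ (by omega)] at hlast
    exact hmid hlast

lemma F1_disjoint :
    Pairwise (Function.onFun Disjoint
      (fun p : {p : List (St N) // Fk j 1 p} => Cy p.1)) := by
  rintro ⟨p, hp⟩ ⟨p', hp'⟩ hne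
  rw [Function.onFun, Set.disjoint_left]
  intro ω hω hω'
  rcases le_total p.length p'.length with hle | hle
  · exact hne (Subtype.ext (F1_disjoint_aux hp hp' hle hω hω'))
  · exact hne (Subtype.ext (F1_disjoint_aux hp' hp hle hω' hω).symm)

def Qk (lam : ℝ) (mu : Fin N → St N → ℝ) (P : Measure (ℕ → St N)) (j : Fin N) (k : ℕ) :
    ℝ≥0∞ := ∑' p : {p : List (St N) // Fk j k p}, P (Cy p.1)

lemma Q1_le_one : Qk lam mu P j 1 ≤ 1 := by
  unfold Qk
  rw [← measure_iUnion F1_disjoint (fun p => measurable_Cy p.1)]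
  exact prob_le_one

include hN hlam hmu hBlam hB0 hB hc hclam hcj hchain in
lemma Q_step {k : ℕ} (hk : 1 ≤ k) :
    Qk lam mu P j (k + 1) ≤ ENNReal.ofReal (Gf N lam c B n0 0) * Qk lam mu P j k := by
  classical
  have hdec : ∀ p : {p : List (St N) // Fk j (k+1) p},
      ∃ z : {q : List (St N) // Fk j k q} × {w : List (St N) // FH j w},
        p.1 = z.1.1 ++ z.2.1 := by
    rintro ⟨p, hp⟩
    obtain ⟨q, w, hq, hw, heq⟩ := Fk_succ_elim hk hp
    exact ⟨(⟨q, hq⟩, ⟨w, hw⟩), heq⟩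
  choose m hm using hdec
  have hminj : Function.Injective m := by
    intro p p' h
    apply Subtype.ext
    rw [hm p, hm p', h]
  calc Qk lam mu P j (k+1)
      = ∑' p : {p : List (St N) // Fk j (k+1) p}, P (Cy ((m p).1.1 ++ (m p).2.1)) :=
        tsum_congr fun p => by rw [← hm p]
    _ ≤ ∑' z : {q : List (St N) // Fk j k q} × {w : List (St N) // FH j w},
          P (Cy (z.1.1 ++ z.2.1)) :=
        ENNReal.tsum_comp_le_tsum_of_injective hminj _
    _ = ∑' q : {q : List (St N) // Fk j k q}, ∑' w : {w : List (St N) // FH j w},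
          P (Cy (q.1 ++ w.1)) :=
        ENNReal.tsum_prod (f := fun (q : {q : List (St N) // Fk j k q})
          (w : {w : List (St N) // FH j w}) => P (Cy (q.1 ++ w.1)))
    _ = ∑' q : {q : List (St N) // Fk j k q},
          P (Cy q.1) * hh lam mu j (q.1.getLast (Fk_ne_nil q.2)) := by
        refine tsum_congr fun q => ?_
        rw [show (∑' w : {w : List (St N) // FH j w}, P (Cy (q.1 ++ w.1))) =
            ∑' w : {w : List (St N) // FH j w},
              P (Cy q.1) * wt lam mu (q.1.getLast (Fk_ne_nil q.2)) w.1 from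
          tsum_congr fun w => P_cy_append hchain w.1 q.1 (Fk_ne_nil q.2),
          ENNReal.tsum_mul_left]
        congr 1
        unfold hh
        refine (tsum_eq_tsum_of_ne_zero_bij (fun w => w.1.1) ?_ ?_ ?_).symm
        · rintro ⟨⟨w, hw⟩, _⟩ ⟨⟨w', hw'⟩, _⟩ h
          simpa using h
        · intro w hw
          rw [Function.mem_support, ne_eq, ite_eq_right_iff, not_forall] at hw
          obtain ⟨hFH, hne⟩ := hw
          exact ⟨⟨⟨w, hFH⟩, hne⟩, rfl⟩
        · rintro ⟨⟨w, hw⟩, _⟩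
          simp [hw]
    _ ≤ ∑' q : {q : List (St N) // Fk j k q},
          P (Cy q.1) * ENNReal.ofReal (Gf N lam c B n0 0) := by
        refine ENNReal.tsum_le_tsum fun q => mul_le_mul_right ?_ _
        have hlast : (q.1.getLast (Fk_ne_nil q.2)) j = 0 := by
          have h1 := Fk_getD_last q.2
          have h2 : q.1.getD (q.1.length - 1) zSt = q.1.getLast (Fk_ne_nil q.2) := by
            rw [List.getD_eq_getElem _ _ (by have := Fk_len q.2; omega)]
            exact (List.getLast_eq_getElem _).symm
          rwa [h2] at h1
        have := hh_le_G hN hlam hmu hBlam hB0 hB hc hclam hcj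
          (q.1.getLast (Fk_ne_nil q.2))
        rwa [hlast] at this
    _ = ENNReal.ofReal (Gf N lam c B n0 0) * Qk lam mu P j k := by
        rw [ENNReal.tsum_mul_right, mul_comm]
        rfl

include hN hlam hmu hBlam hB0 hB hc hclam hcj hchain in
lemma Q_bound : ∀ k : ℕ, Qk lam mu P j (k + 1) ≤ ENNReal.ofReal (Gf N lam c B n0 0) ^ k := by
  intro k
  induction k with
  | zero => simpa using Q1_le_one
  | succ k ih =>
    calc Qk lam mu P j (k + 2)
        ≤ ENNReal.ofReal (Gf N lam c B n0 0) * Qk lam mu P j (k + 1) :=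
          Q_step hN hlam hmu hBlam hB0 hB hc hclam hcj hchain (by omega)
      _ ≤ ENNReal.ofReal (Gf N lam c B n0 0) * ENNReal.ofReal (Gf N lam c B n0 0) ^ k :=
          mul_le_mul_right ih _
      _ = ENNReal.ofReal (Gf N lam c B n0 0) ^ (k + 1) := (pow_succ' _ _).symm


lemma seg_split (ω : ℕ → St N) {t t' : ℕ} (h : t < t') :
    (List.range (t' + 1)).map ω = (List.range (t + 1)).map ω ++
      (List.range (t' - t)).map (fun s => ω (t + 1 + s)) := by
  rw [show t' + 1 = (t + 1) + (t' - t) by omega, List.range_add, List.map_append,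
    List.map_map]
  rfl

lemma FH_seg (ω : ℕ → St N) {t t' : ℕ} (ht : t < t') (hlast : (ω t') j = 0)
    (hmid : ∀ s, t + 1 ≤ s → s < t' → (ω s) j ≠ 0) :
    FH j ((List.range (t' - t)).map (fun s => ω (t + 1 + s))) := by
  have hlen : ((List.range (t' - t)).map (fun s => ω (t + 1 + s))).length = t' - t := by
    simp
  apply FH_intro
  · rw [← List.length_pos_iff, hlen]; omega
  · rw [hlen, getD_map_range _ (by omega), show t + 1 + (t' - t - 1) = t' by omega]
    exact hlast
  · intro s hs
    rw [hlen] at hs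
    rw [getD_map_range _ (by omega)]
    exact hmid _ (by omega) (by omega)

lemma traj {ω : ℕ → St N} (hω : ∀ T, ∃ t, T ≤ t ∧ (ω t) j = 0) :
    ∀ k : ℕ, ∃ t, 1 ≤ t ∧ (ω t) j = 0 ∧ Fk j (k + 1) ((List.range (t + 1)).map ω) := by
  intro k
  induction k with
  | zero =>
    have hex : ∃ t, 1 ≤ t ∧ (ω t) j = 0 := hω 1
    obtain ⟨ht1, ht2⟩ := Nat.find_spec hex
    refine ⟨Nat.find hex, ht1, ht2, ?_⟩
    rw [seg_split ω (show 0 < Nat.find hex by omega),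
      show (List.range (0 + 1)).map ω = [ω 0] by simp [List.range_succ], List.singleton_append]
    refine Fk.base _ _ (FH_seg ω (by omega) ?_ ?_)
    · exact ht2
    · intro s hs1 hs2 h0
      exact absurd ⟨by omega, h0⟩ (Nat.find_min hex (show s < Nat.find hex by omega))
  | succ k ih =>
    obtain ⟨t, ht1, ht2, hFk⟩ := ih
    have hex : ∃ u, t + 1 ≤ u ∧ (ω u) j = 0 := hω (t + 1)
    obtain ⟨ht'1, ht'2⟩ := Nat.find_spec hex
    refine ⟨Nat.find hex, by omega, ht'2, ?_⟩
    rw [seg_split ω (show t < Nat.find hex by omega)]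
    refine Fk.step _ _ hFk (FH_seg ω (by omega) ht'2 ?_)
    intro s hs1 hs2 h0
    exact absurd ⟨hs1, h0⟩ (Nat.find_min hex hs2)

lemma Bj_subset (k : ℕ) :
    {ω : ℕ → St N | ∀ T, ∃ t, T ≤ t ∧ (ω t) j = 0} ⊆
      ⋃ p : {p : List (St N) // Fk j (k + 1) p}, Cy p.1 := by
  intro ω hω
  obtain ⟨t, _, _, hFk⟩ := traj hω k
  refine Set.mem_iUnion.2 ⟨⟨_, hFk⟩, fun s hs => ?_⟩
  exact (getD_map_range ω (by simpa using hs)).symm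

include hN hlam hmu hBlam hB0 hB hc hclam hcj hchain in
lemma PBj_zero : P {ω : ℕ → St N | ∀ T, ∃ t, T ≤ t ∧ (ω t) j = 0} = 0 := by
  have hN1 : (1:ℝ) ≤ (N:ℝ) := by exact_mod_cast hN
  have hNB : (0:ℝ) < N * (lam + B) := by nlinarith
  have hβ : ENNReal.ofReal (Gf N lam c B n0 0) < 1 := by
    rw [ENNReal.ofReal_lt_one]
    have hp0 : 0 < p0 N lam B := div_pos hlam hNB
    have hα : 0 < 1 - c / lam := by
      have : c / lam < 1 := (div_lt_one hlam).2 hclam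
      linarith
    have : 0 < p0 N lam B ^ (n0 + 1 - 0) * (1 - c / lam) := by positivity
    unfold Gf
    linarith
  have hle : ∀ k : ℕ, P {ω : ℕ → St N | ∀ T, ∃ t, T ≤ t ∧ (ω t) j = 0} ≤
      ENNReal.ofReal (Gf N lam c B n0 0) ^ k := by
    intro k
    calc P {ω : ℕ → St N | ∀ T, ∃ t, T ≤ t ∧ (ω t) j = 0}
        ≤ P (⋃ p : {p : List (St N) // Fk j (k + 1) p}, Cy p.1) :=
          measure_mono (Bj_subset k)
      _ ≤ ∑' p : {p : List (St N) // Fk j (k + 1) p}, P (Cy p.1) := measure_iUnion_le _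
      _ ≤ ENNReal.ofReal (Gf N lam c B n0 0) ^ k :=
          Q_bound hN hlam hmu hBlam hB0 hB hc hclam hcj hchain k
  have h0 : P {ω : ℕ → St N | ∀ T, ∃ t, T ≤ t ∧ (ω t) j = 0} ≤ 0 :=
    ge_of_tendsto' (ENNReal.tendsto_pow_atTop_nhds_zero_of_lt_one hβ) hle
  exact le_antisymm h0 zero_le

end Decomp


lemma supAtLevel_le {mu : Fin N → St N → ℝ} {B : ℝ} (hB : ∀ l x, mu l x ≤ B)
    (hmu_equiv : ∀ (σ : Equiv.Perm (Fin N)) (x : Fin N → ℕ) (i : Fin N),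
      mu (σ i) (x ∘ ⇑σ.symm) = mu i x)
    (a b : Fin N) (n : ℕ) : supAtLevel mu a n ≤ supAtLevel mu b n := by
  have hbdd : ∀ (l : Fin N),
      BddAbove (Set.range fun x : {x : St N // x l = n} => mu l x.1) := fun l =>
    ⟨B, by rintro _ ⟨x, rfl⟩; exact hB l x.1⟩
  haveI : Nonempty {x : St N // x a = n} := ⟨⟨fun _ => n, rfl⟩⟩
  apply ciSup_le
  rintro ⟨x, hx⟩
  have h1 := hmu_equiv (Equiv.swap a b) x a
  rw [Equiv.swap_apply_left] at h1
  have h2 : (x ∘ ⇑(Equiv.swap a b).symm) b = n := by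
    simp [Equiv.symm_swap, Equiv.swap_apply_right, hx]
  calc mu a x = mu b (x ∘ ⇑(Equiv.swap a b).symm) := h1.symm
    _ ≤ supAtLevel mu b n := le_ciSup (hbdd b) ⟨_, h2⟩

end EvSat

open EvSat in
/-- For `N` parallel homogeneous queues (common strictly positive
arrival rate `λ`, bounded strictly positive permutation-equivariant service rates
`μ_i`), if some queue `i` satisfies `λ > limsup_{x_i → ∞} sup_{x_j : j ≠ i} μ_i(x)`,
then — independently of the initial state (no restriction is placed on the initial
distribution) — almost surely there is a time `T` from which on every queue is
nonempty, i.e. the system is eventually saturated. -/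
theorem eventually_saturated
    {N : ℕ} (hN : 0 < N) (lam : ℝ) (hlam : 0 < lam)
    (mu : Fin N → (Fin N → ℕ) → ℝ)
    (hmu_pos : ∀ i x, 0 < mu i x)
    (hmu_bdd : ∃ B : ℝ, ∀ i x, mu i x ≤ B)
    (hmu_equiv : ∀ (σ : Equiv.Perm (Fin N)) (x : Fin N → ℕ) (i : Fin N),
      mu (σ i) (x ∘ ⇑σ.symm) = mu i x)
    (P : Measure (ℕ → Fin N → ℕ)) [IsProbabilityMeasure P]
    (hchain : IsQueueChain (fun _ => lam) mu P)
    (i : Fin N)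
    (hlimsup : limsup (supAtLevel mu i) atTop < lam) :
    P {ω | ∃ T : ℕ, ∀ t ≥ T, ∀ j : Fin N, 0 < ω t j} = 1 := by
  classical
  obtain ⟨B0, hB0'⟩ := hmu_bdd
  set B : ℝ := max B0 lam with hBdef
  have hBlam : lam ≤ B := le_max_right _ _
  have hB0 : 0 < B := lt_of_lt_of_le hlam hBlam
  have hB : ∀ l x, mu l x ≤ B := fun l x => le_trans (hB0' l x) (le_max_left _ _)
  have hbdd : ∀ (l : Fin N) (n : ℕ),
      BddAbove (Set.range fun x : {x : St N // x l = n} => mu l x.1) := fun l n =>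
    ⟨B, by rintro _ ⟨x, rfl⟩; exact hB l x.1⟩
  -- extract drift constants
  have hbound : IsBoundedUnder (· ≤ ·) atTop (supAtLevel mu i) := by
    refine isBoundedUnder_of ⟨B, fun n => ?_⟩
    haveI : Nonempty {x : St N // x i = n} := ⟨⟨fun _ => n, rfl⟩⟩
    exact ciSup_le fun x => hB i x.1
  set L : ℝ := limsup (supAtLevel mu i) atTop with hL
  have hev : ∀ᶠ n in atTop, supAtLevel mu i n < (L + lam) / 2 :=
    eventually_lt_of_limsup_lt (by rw [← hL]; linarith) hbound
  obtain ⟨n0, hn0⟩ := eventually_atTop.1 hev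
  set c : ℝ := max ((L + lam) / 2) (lam / 2) with hcdef
  have hc : 0 < c := lt_of_lt_of_le (by linarith) (le_max_right _ _)
  have hclam : c < lam := max_lt (by linarith) (by linarith)
  have hcj : ∀ (j : Fin N) (x : St N), n0 ≤ x j → mu j x ≤ c := by
    intro j x hx
    have h1 : mu j x ≤ supAtLevel mu j (x j) := le_ciSup (hbdd j (x j)) ⟨x, rfl⟩
    have h2 : supAtLevel mu j (x j) ≤ supAtLevel mu i (x j) :=
      supAtLevel_le hB hmu_equiv j i (x j)
    have h3 : supAtLevel mu i (x j) < (L + lam) / 2 := hn0 (x j) hx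
    calc mu j x ≤ supAtLevel mu i (x j) := le_trans h1 h2
      _ ≤ c := le_trans h3.le (le_max_left _ _)
  -- measurability of the target event
  set A : Set (ℕ → Fin N → ℕ) := {ω | ∃ T : ℕ, ∀ t ≥ T, ∀ j : Fin N, 0 < ω t j} with hA
  have hmeasA : MeasurableSet A := by
    have hrw : A = ⋃ T : ℕ, ⋂ (t : ℕ), ⋂ (j : Fin N),
        {ω : ℕ → Fin N → ℕ | T ≤ t → 0 < ω t j} := by
      ext ω
      simp only [hA, Set.mem_setOf_eq, Set.mem_iUnion, Set.mem_iInter]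
      constructor
      · rintro ⟨T, hT⟩; exact ⟨T, fun t j ht => hT t ht j⟩
      · rintro ⟨T, hT⟩; exact ⟨T, fun t ht j => hT t j ht⟩
    rw [hrw]
    refine MeasurableSet.iUnion fun T => MeasurableSet.iInter fun t =>
      MeasurableSet.iInter fun j => ?_
    by_cases h : T ≤ t
    · have : {ω : ℕ → Fin N → ℕ | T ≤ t → 0 < ω t j} =
          (fun ω : ℕ → Fin N → ℕ => ω t j) ⁻¹' (Set.Ioi 0) := by
        ext ω; simp [h]
      rw [this]
      exact ((measurable_pi_apply j).comp (measurable_pi_apply t))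
        (show MeasurableSet (Set.Ioi 0) from trivial)
    · have : {ω : ℕ → Fin N → ℕ | T ≤ t → 0 < ω t j} = Set.univ := by
        ext ω; simp [h]
      rw [this]
      exact MeasurableSet.univ
  -- the complement is contained in the union of the bad events
  have hsub : Aᶜ ⊆ ⋃ j : Fin N,
      {ω : ℕ → Fin N → ℕ | ∀ T, ∃ t, T ≤ t ∧ (ω t) j = 0} := by
    intro ω hω
    simp only [hA, Set.mem_compl_iff, Set.mem_setOf_eq] at hω
    push_neg at hω
    by_contra hc2
    simp only [Set.mem_iUnion, Set.mem_setOf_eq] at hc2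
    push_neg at hc2
    choose Tj hTj using hc2
    obtain ⟨t, ht, j0, hj0⟩ := hω (Finset.univ.sup Tj)
    exact hTj j0 t (le_trans (Finset.le_sup (Finset.mem_univ j0)) ht) (by omega)
  have hPB : ∀ j : Fin N,
      P {ω : ℕ → Fin N → ℕ | ∀ T, ∃ t, T ≤ t ∧ (ω t) j = 0} = 0 := fun j =>
    PBj_zero hN hlam hmu_pos hBlam hB0 hB hc hclam (hcj j) hchain
  have hPc : P Aᶜ = 0 := by
    refine le_antisymm ?_ zero_le
    calc P Aᶜ ≤ P (⋃ j : Fin N,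
          {ω : ℕ → Fin N → ℕ | ∀ T, ∃ t, T ≤ t ∧ (ω t) j = 0}) := measure_mono hsub
      _ ≤ ∑' j : Fin N, P {ω : ℕ → Fin N → ℕ | ∀ T, ∃ t, T ≤ t ∧ (ω t) j = 0} :=
          measure_iUnion_le _
      _ = 0 := by simp [hPB]
  exact (prob_compl_eq_zero_iff hmeasA).1 hPc
end
end

section
/- Consider the discrete-time Markov chain X = (X_1, …, X_N) on ℤ_{≥0}^N modeling N parallel queues with infinite buffers, strictly positive arrival rates λ_i > 0 and bounded state-dependent service rates μ_i : ℤ_{≥0}^N → (0, ∞), with per-event transition probabilities P(x ↦ x + e_i) = λ_i / D(x) and, when x_i > 0, P(x ↦ x − e_i) = μ_i(x) / D(x), where D(x) = Σ_j λ_j + Σ_{j : x_j > 0} μ_j(x). If queue i satisfies λ_i > limsup_{x_i → ∞} sup_{x_j : j ≠ i} μ_i(x), then queue i is unstable: for any initial state, almost surely X_i(t) → ∞ as t → ∞; in particular, almost surely there exists T such that X_i(t) > 0 for all t ≥ T. -/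
open MeasureTheory Filter Function

noncomputable section

namespace QueueAux

variable {N : ℕ}

abbrev St (N : ℕ) := Fin N → ℕ

def up (x : St N) (j : Fin N) : St N := Function.update x j (x j + 1)
def down (x : St N) (j : Fin N) : St N := Function.update x j (x j - 1)

lemma up_apply_self (x : St N) (j : Fin N) : up x j j = x j + 1 := by
  simp [up]

lemma up_apply_ne (x : St N) {j k : Fin N} (h : k ≠ j) : up x j k = x k := by
  simp [up, Function.update_of_ne h]

lemma down_apply_self (x : St N) (j : Fin N) : down x j j = x j - 1 := by
  simp [down]

lemma down_apply_ne (x : St N) {j k : Fin N} (h : k ≠ j) : down x j k = x k := by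
  simp [down, Function.update_of_ne h]

lemma sum_up (x : St N) (j : Fin N) : ∑ k, up x j k = (∑ k, x k) + 1 := by
  have h1 : ∑ k, up x j k = (x j + 1) + ∑ k ∈ Finset.univ \ {j}, x k :=
    Finset.sum_update_of_mem (Finset.mem_univ j) x (x j + 1)
  have h2 : ∑ k, x k = x j + ∑ k ∈ Finset.univ \ {j}, x k :=
    (Finset.sum_eq_add_sum_sdiff_singleton_of_mem (Finset.mem_univ j) x)
  omega

lemma sum_down (x : St N) (j : Fin N) (h : 0 < x j) :
    (∑ k, down x j k) + 1 = ∑ k, x k := by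
  have h1 : ∑ k, down x j k = (x j - 1) + ∑ k ∈ Finset.univ \ {j}, x k :=
    Finset.sum_update_of_mem (Finset.mem_univ j) x (x j - 1)
  have h2 : ∑ k, x k = x j + ∑ k ∈ Finset.univ \ {j}, x k :=
    (Finset.sum_eq_add_sum_sdiff_singleton_of_mem (Finset.mem_univ j) x)
  omega

lemma up_inj {x : St N} {j k : Fin N} (h : up x j = up x k) : j = k := by
  by_contra hne
  have h1 := congrFun h j
  rw [up_apply_self] at h1
  rw [up_apply_ne x (fun hh : j = k => hne hh)] at h1
  omega

lemma down_inj {x : St N} {j k : Fin N} (hj : 0 < x j) (h : down x j = down x k) :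
    j = k := by
  by_contra hne
  have h1 := congrFun h j
  rw [down_apply_self] at h1
  rw [down_apply_ne x (fun hh : j = k => hne hh)] at h1
  omega

lemma up_ne_down {x : St N} (j k : Fin N) (hk : 0 < x k) : up x j ≠ down x k := by
  intro h
  have h1 : ∑ m, up x j m = ∑ m, down x k m := by rw [h]
  have h2 := sum_up x j
  have h3 := sum_down x k hk
  omega

lemma mem_backlogged {x : St N} {j : Fin N} : j ∈ backlogged x ↔ 0 < x j := by
  simp [backlogged]

lemma kernel_up (lam : Fin N → ℝ) (mu : Fin N → (Fin N → ℕ) → ℝ) (x : St N)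
    (j : Fin N) : queueKernel lam mu x (up x j) = lam j / normalizer lam mu x := by
  unfold queueKernel
  congr 1
  have h1 : (∑ k, if up x j = Function.update x k (x k + 1) then lam k else 0)
      = lam j := by
    rw [Finset.sum_eq_single_of_mem j (Finset.mem_univ j)]
    · simp [up]
    · intro k _ hkj
      rw [if_neg]
      intro h
      exact hkj (up_inj (h := h.symm))
  have h2 : (∑ k, if 0 < x k ∧ up x j = Function.update x k (x k - 1)
      then mu k x else 0) = 0 := by
    apply Finset.sum_eq_zero
    intro k _
    rw [if_neg]
    rintro ⟨hk, h⟩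
    exact up_ne_down j k hk h
  rw [h1, h2, add_zero]

lemma kernel_down (lam : Fin N → ℝ) (mu : Fin N → (Fin N → ℕ) → ℝ) (x : St N)
    (j : Fin N) (hj : 0 < x j) :
    queueKernel lam mu x (down x j) = mu j x / normalizer lam mu x := by
  unfold queueKernel
  congr 1
  have h1 : (∑ k, if down x j = Function.update x k (x k + 1) then lam k else 0)
      = 0 := by
    apply Finset.sum_eq_zero
    intro k _
    rw [if_neg]
    intro h
    exact up_ne_down k j hj h.symm
  have h2 : (∑ k, if 0 < x k ∧ down x j = Function.update x k (x k - 1)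
      then mu k x else 0) = mu j x := by
    rw [Finset.sum_eq_single_of_mem j (Finset.mem_univ j)]
    · simp [down, hj]
    · intro k _ hkj
      rw [if_neg]
      rintro ⟨hk, h⟩
      exact hkj (down_inj hk (h := h.symm))
  rw [h1, h2, zero_add]

def nbrs (x : St N) : Finset (St N) :=
  (Finset.univ.image fun j => up x j) ∪ ((backlogged x).image fun j => down x j)

lemma kernel_eq_zero (lam : Fin N → ℝ) (mu : Fin N → (Fin N → ℕ) → ℝ) (x : St N)
    {y : St N} (hy : y ∉ nbrs x) : queueKernel lam mu x y = 0 := by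
  unfold queueKernel
  have h1 : (∑ k, if y = Function.update x k (x k + 1) then lam k else 0) = 0 := by
    apply Finset.sum_eq_zero
    intro k _
    rw [if_neg]
    intro h
    exact hy (Finset.mem_union_left _ (Finset.mem_image.2 ⟨k, Finset.mem_univ k, h.symm⟩))
  have h2 : (∑ k, if 0 < x k ∧ y = Function.update x k (x k - 1) then mu k x else 0) = 0 := by
    apply Finset.sum_eq_zero
    intro k _
    rw [if_neg]
    rintro ⟨hk, h⟩
    exact hy (Finset.mem_union_right _
      (Finset.mem_image.2 ⟨k, mem_backlogged.2 hk, h.symm⟩))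
  rw [h1, h2, add_zero, zero_div]


section Kern

variable (lam : Fin N → ℝ) (mu : Fin N → (Fin N → ℕ) → ℝ)

lemma normalizer_pos (hlam : ∀ j, 0 < lam j) (hmu : ∀ j x, 0 < mu j x)
    (i : Fin N) (x : St N) : 0 < normalizer lam mu x := by
  have h1 : 0 < ∑ j, lam j :=
    Finset.sum_pos (fun j _ => hlam j) ⟨i, Finset.mem_univ i⟩
  have h2 : 0 ≤ ∑ j ∈ backlogged x, mu j x :=
    Finset.sum_nonneg fun j _ => (hmu j x).le
  unfold normalizer; linarith

lemma normalizer_le {B : ℝ} (hB : ∀ j x, mu j x ≤ B) (hB0 : 0 ≤ B) (x : St N) :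
    normalizer lam mu x ≤ (∑ j, lam j) + N * B := by
  unfold normalizer
  have h1 : ∑ j ∈ backlogged x, mu j x ≤ (backlogged x).card • B :=
    Finset.sum_le_card_nsmul _ _ _ fun j _ => hB j x
  have h2 : ((backlogged x).card : ℝ) * B ≤ N * B := by
    apply mul_le_mul_of_nonneg_right _ hB0
    have := (backlogged x).card_le_univ
    simp only [Finset.card_univ, Fintype.card_fin] at this
    exact_mod_cast this
  rw [nsmul_eq_mul] at h1
  linarith

lemma kernel_sum (x : St N) (f : St N → ℝ) :
    ∑ y ∈ nbrs x, queueKernel lam mu x y * f y =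
      ((∑ j, lam j * f (up x j)) +
        ∑ j ∈ backlogged x, mu j x * f (down x j)) / normalizer lam mu x := by
  have hdisj : Disjoint (Finset.univ.image fun j => up x j)
      ((backlogged x).image fun j => down x j) := by
    rw [Finset.disjoint_left]
    intro y hy1 hy2
    obtain ⟨j, _, hj⟩ := Finset.mem_image.1 hy1
    obtain ⟨k, hk, hk2⟩ := Finset.mem_image.1 hy2
    exact up_ne_down j k (mem_backlogged.1 hk) (hj.trans hk2.symm)
  unfold nbrs
  rw [Finset.sum_union hdisj]
  have e1 : ∑ y ∈ Finset.univ.image (fun j => up x j),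
      queueKernel lam mu x y * f y = ∑ j, queueKernel lam mu x (up x j) * f (up x j) := by
    rw [Finset.sum_image]
    intro a _ b _ h
    exact up_inj h
  have e2 : ∑ y ∈ (backlogged x).image (fun j => down x j),
      queueKernel lam mu x y * f y
      = ∑ j ∈ backlogged x, queueKernel lam mu x (down x j) * f (down x j) := by
    rw [Finset.sum_image]
    intro a ha b _ h
    exact down_inj (mem_backlogged.1 ha) h
  rw [e1, e2]
  have e3 : ∀ j, queueKernel lam mu x (up x j) * f (up x j)
      = lam j * f (up x j) / normalizer lam mu x := by
    intro j; rw [kernel_up]; ring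
  have e4 : ∀ j ∈ backlogged x, queueKernel lam mu x (down x j) * f (down x j)
      = mu j x * f (down x j) / normalizer lam mu x := by
    intro j hj; rw [kernel_down lam mu x j (mem_backlogged.1 hj)]; ring
  rw [Finset.sum_congr rfl fun j _ => e3 j, Finset.sum_congr rfl e4,
    ← Finset.sum_div, ← Finset.sum_div, ← add_div]

variable (i : Fin N) (L : ℕ)

/-- `hitp T x` : probability of reaching level `≤ L` in coordinate `i`
within `T` steps, starting from `x` (time 0 counts). -/
def hitp : ℕ → St N → ℝ
  | 0, x => if x i ≤ L then 1 else 0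
  | (T+1), x => if x i ≤ L then 1 else
      ((∑ j, lam j * hitp T (up x j)) +
        ∑ j ∈ backlogged x, mu j x * hitp T (down x j)) / normalizer lam mu x

lemma hitp_nonneg (hlam : ∀ j, 0 < lam j) (hmu : ∀ j x, 0 < mu j x) :
    ∀ T (x : St N), 0 ≤ hitp lam mu i L T x := by
  intro T
  induction T with
  | zero => intro x; unfold hitp; split <;> norm_num
  | succ T ih =>
    intro x
    unfold hitp
    split
    · norm_num
    · apply div_nonneg
      · apply add_nonneg
        · exact Finset.sum_nonneg fun j _ => mul_nonneg (hlam j).le (ih _)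
        · exact Finset.sum_nonneg fun j _ => mul_nonneg (hmu j x).le (ih _)
      · exact (normalizer_pos lam mu hlam hmu i x).le

lemma hitp_le (hlam : ∀ j, 0 < lam j) (hmu : ∀ j x, 0 < mu j x)
    {ρ : ℝ} (hρ0 : 0 < ρ) (hρ1 : ρ < 1)
    (hthr : ∀ x : St N, L < x i → mu i x ≤ ρ * lam i) :
    ∀ T (x : St N), hitp lam mu i L T x ≤ ρ ^ (x i - L) := by
  intro T
  induction T with
  | zero =>
    intro x; unfold hitp
    split
    · rename_i h
      rw [Nat.sub_eq_zero_of_le h]; norm_num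
    · exact pow_nonneg hρ0.le _
  | succ T ih =>
    intro x
    unfold hitp
    split
    · rename_i h
      rw [Nat.sub_eq_zero_of_le h]; norm_num
    · rename_i h
      push_neg at h
      set r := ρ ^ (x i - L) with hr
      have hrpos : 0 < r := pow_pos hρ0 _
      have hD := normalizer_pos lam mu hlam hmu i x
      rw [div_le_iff₀ hD]
      have hiB : i ∈ backlogged x := mem_backlogged.2 (by omega)
      -- split the lambda sum
      have s1 : ∑ j, lam j * hitp lam mu i L T (up x j) =
          lam i * hitp lam mu i L T (up x i) +
          ∑ j ∈ Finset.univ \ {i}, lam j * hitp lam mu i L T (up x j) :=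
        Finset.sum_eq_add_sum_sdiff_singleton_of_mem (Finset.mem_univ i) _
      have s2 : ∑ j ∈ backlogged x, mu j x * hitp lam mu i L T (down x j) =
          mu i x * hitp lam mu i L T (down x i) +
          ∑ j ∈ (backlogged x) \ {i}, mu j x * hitp lam mu i L T (down x j) :=
        Finset.sum_eq_add_sum_sdiff_singleton_of_mem hiB _
      -- level computations
      have upi : (up x i) i = x i + 1 := up_apply_self x i
      have downi : (down x i) i = x i - 1 := down_apply_self x i
      have b1 : hitp lam mu i L T (up x i) ≤ ρ * r := by
        have := ih (up x i)
        rw [upi] at this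
        have he : x i + 1 - L = (x i - L) + 1 := by omega
        rw [he, pow_succ] at this
        linarith [this]
      have b2 : hitp lam mu i L T (down x i) * ρ ≤ r := by
        have := ih (down x i)
        rw [downi] at this
        have he : x i - L = (x i - 1 - L) + 1 := by omega
        have : hitp lam mu i L T (down x i) ≤ ρ ^ (x i - 1 - L) := this
        calc hitp lam mu i L T (down x i) * ρ ≤ ρ ^ (x i - 1 - L) * ρ := by
              apply mul_le_mul_of_nonneg_right this hρ0.le
          _ = r := by rw [hr, he, pow_succ]
      have b3 : ∑ j ∈ Finset.univ \ {i}, lam j * hitp lam mu i L T (up x j) ≤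
          (∑ j ∈ Finset.univ \ {i}, lam j) * r := by
        rw [Finset.sum_mul]
        apply Finset.sum_le_sum
        intro j hj
        have hji : j ≠ i := by
          simpa using (Finset.mem_sdiff.1 hj).2
        have hl : (up x j) i = x i := up_apply_ne x hji.symm
        have := ih (up x j)
        rw [hl] at this
        exact mul_le_mul_of_nonneg_left this (hlam j).le
      have b4 : ∑ j ∈ (backlogged x) \ {i}, mu j x * hitp lam mu i L T (down x j) ≤
          (∑ j ∈ (backlogged x) \ {i}, mu j x) * r := by
        rw [Finset.sum_mul]
        apply Finset.sum_le_sum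
        intro j hj
        have hji : j ≠ i := by
          simpa using (Finset.mem_sdiff.1 hj).2
        have hl : (down x j) i = x i := down_apply_ne x hji.symm
        have := ih (down x j)
        rw [hl] at this
        exact mul_le_mul_of_nonneg_left this (hmu j x).le
      -- the drift inequality
      have hμ : mu i x ≤ ρ * lam i := hthr x (by omega)
      have hμ0 : 0 < mu i x := hmu i x
      have key : lam i * (ρ * r) + mu i x * hitp lam mu i L T (down x i) ≤
          lam i * r + mu i x * r := by
        have hdown : mu i x * hitp lam mu i L T (down x i) * ρ ≤ mu i x * r :=
          calc mu i x * hitp lam mu i L T (down x i) * ρ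
              = mu i x * (hitp lam mu i L T (down x i) * ρ) := by ring
            _ ≤ mu i x * r := mul_le_mul_of_nonneg_left b2 hμ0.le
        nlinarith [mul_pos hμ0 hrpos, mul_nonneg (mul_nonneg hμ0.le hrpos.le) (sub_nonneg.2 hρ1.le),
          mul_nonneg (mul_nonneg (hlam i).le hrpos.le) (sub_nonneg.2 hρ1.le),
          mul_le_mul_of_nonneg_right hμ (mul_nonneg hrpos.le (sub_nonneg.2 hρ1.le))]
      -- assemble
      have hDexp : normalizer lam mu x =
          (lam i + ∑ j ∈ Finset.univ \ {i}, lam j) +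
          (mu i x + ∑ j ∈ (backlogged x) \ {i}, mu j x) := by
        unfold normalizer
        rw [Finset.sum_eq_add_sum_sdiff_singleton_of_mem (Finset.mem_univ i) lam,
          Finset.sum_eq_add_sum_sdiff_singleton_of_mem hiB (fun j => mu j x)]
      have hup : lam i * hitp lam mu i L T (up x i) ≤ lam i * (ρ * r) :=
        mul_le_mul_of_nonneg_left b1 (hlam i).le
      rw [s1, s2, hDexp]
      ring_nf
      nlinarith [key, b3, b4, hup]

end Kern

lemma hitp_zero {N : ℕ} (lam : Fin N → ℝ) (mu : Fin N → (Fin N → ℕ) → ℝ)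
    (i : Fin N) (L : ℕ) (x : St N) :
    hitp lam mu i L 0 x = if x i ≤ L then 1 else 0 := rfl

lemma hitp_succ {N : ℕ} (lam : Fin N → ℝ) (mu : Fin N → (Fin N → ℕ) → ℝ)
    (i : Fin N) (L : ℕ) (T : ℕ) (x : St N) :
    hitp lam mu i L (T+1) x = if x i ≤ L then 1 else
      ((∑ j, lam j * hitp lam mu i L T (up x j)) +
        ∑ j ∈ backlogged x, mu j x * hitp lam mu i L T (down x j)) /
          normalizer lam mu x := rfl

-- ## cylinders

def cyl (π : ℕ → St N) (s : ℕ) : Set (ℕ → St N) := {ω | ∀ u ≤ s, ω u = π u}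

lemma measurable_coord (u : ℕ) (i : Fin N) :
    Measurable fun ω : ℕ → St N => ω u i :=
  (measurable_pi_apply i).comp (measurable_pi_apply u)

lemma cyl_measurable (π : ℕ → St N) (s : ℕ) : MeasurableSet (cyl π s) := by
  have : cyl π s = ⋂ (u : ℕ) (_ : u ≤ s), (fun ω : ℕ → St N => ω u) ⁻¹' {π u} := by
    ext ω; simp [cyl]
  rw [this]
  exact MeasurableSet.iInter fun u => MeasurableSet.iInter fun _ =>
    (measurable_pi_apply u) (measurableSet_singleton (π u))

lemma cyl_congr {π π' : ℕ → St N} {s : ℕ} (h : ∀ u ≤ s, π u = π' u) :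
    cyl π s = cyl π' s := by
  ext ω
  constructor <;> intro hω u hu
  · rw [hω u hu, h u hu]
  · rw [hω u hu, h u hu]

lemma cyl_antitone (π : ℕ → St N) {s t : ℕ} (h : s ≤ t) : cyl π t ⊆ cyl π s :=
  fun ω hω u hu => hω u (hu.trans h)

lemma chain_step {lam : Fin N → ℝ} {mu : Fin N → (Fin N → ℕ) → ℝ}
    {P : Measure (ℕ → St N)} (hchain : IsQueueChain lam mu P)
    (π : ℕ → St N) (t : ℕ) :
    P (cyl π (t + 1)) =
      ENNReal.ofReal (queueKernel lam mu (π t) (π (t + 1))) * P (cyl π t) :=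
  hchain π t

-- ## hitting events

def hitSet (i : Fin N) (L : ℕ) (s T : ℕ) : Set (ℕ → St N) :=
  {ω | ∃ u, s ≤ u ∧ u ≤ s + T ∧ ω u i ≤ L}

def hitAfter (i : Fin N) (L : ℕ) (s : ℕ) : Set (ℕ → St N) :=
  {ω | ∃ u, s ≤ u ∧ ω u i ≤ L}

lemma hitSet_measurable (i : Fin N) (L s T : ℕ) : MeasurableSet (hitSet i L s T) := by
  have : hitSet i L s T =
      ⋃ (u : ℕ) (_ : s ≤ u) (_ : u ≤ s + T), (fun ω : ℕ → St N => ω u i) ⁻¹' (Set.Iic L) := by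
    ext ω; simp [hitSet]; tauto
  rw [this]
  exact MeasurableSet.iUnion fun u => MeasurableSet.iUnion fun _ =>
    MeasurableSet.iUnion fun _ => (measurable_coord u i) measurableSet_Iic

lemma kernel_nonneg {lam : Fin N → ℝ} {mu : Fin N → (Fin N → ℕ) → ℝ}
    (hlam : ∀ j, 0 < lam j) (hmu : ∀ j x, 0 < mu j x) (i : Fin N) (x y : St N) :
    0 ≤ queueKernel lam mu x y := by
  unfold queueKernel
  apply div_nonneg
  · apply add_nonneg
    · exact Finset.sum_nonneg fun k _ => by split <;> [exact (hlam k).le; rfl]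
    · exact Finset.sum_nonneg fun k _ => by split <;> [exact (hmu k x).le; rfl]
  · exact (normalizer_pos lam mu hlam hmu i x).le

-- ## the main single-excursion estimate

lemma measure_hit {lam : Fin N → ℝ} {mu : Fin N → (Fin N → ℕ) → ℝ}
    (hlam : ∀ j, 0 < lam j) (hmu : ∀ j x, 0 < mu j x)
    {P : Measure (ℕ → St N)} (hchain : IsQueueChain lam mu P)
    (i : Fin N) (L : ℕ) :
    ∀ (T s : ℕ) (π : ℕ → St N),
      P (cyl π s ∩ hitSet i L s T) ≤
        ENNReal.ofReal (hitp lam mu i L T (π s)) * P (cyl π s) := by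
  intro T
  induction T with
  | zero =>
    intro s π
    by_cases h : π s i ≤ L
    · have : hitp lam mu i L 0 (π s) = 1 := by unfold hitp; rw [if_pos h]
      rw [this, ENNReal.ofReal_one, one_mul]
      exact measure_mono Set.inter_subset_left
    · have hempty : cyl π s ∩ hitSet i L s 0 = ∅ := by
        ext ω
        simp only [Set.mem_inter_iff, Set.mem_empty_iff_false, iff_false]
        rintro ⟨hc, u, hu1, hu2, hu3⟩
        have : u = s := by omega
        subst this
        rw [hc u le_rfl] at hu3
        exact h hu3
      rw [hempty, measure_empty]
      exact zero_le
  | succ T ih =>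
    intro s π
    by_cases h : π s i ≤ L
    · have : hitp lam mu i L (T+1) (π s) = 1 := by unfold hitp; rw [if_pos h]
      rw [this, ENNReal.ofReal_one, one_mul]
      exact measure_mono Set.inter_subset_left
    · -- cover by the next state
      have cover : cyl π s ∩ hitSet i L s (T+1) ⊆
          ⋃ (y : St N), (cyl (Function.update π (s+1) y) (s+1) ∩ hitSet i L (s+1) T) := by
        rintro ω ⟨hc, u, hu1, hu2, hu3⟩
        refine Set.mem_iUnion.2 ⟨ω (s+1), ⟨?_, ?_⟩⟩
        · intro v hv
          rcases Nat.lt_or_ge v (s+1) with hv2 | hv2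
          · rw [Function.update_of_ne (by omega), hc v (by omega)]
          · have : v = s + 1 := by omega
            subst this
            rw [Function.update_self]
        · have hus : u ≠ s := by
            intro he; subst he; rw [hc u le_rfl] at hu3; exact h hu3
          exact ⟨u, by omega, by omega, hu3⟩
      calc P (cyl π s ∩ hitSet i L s (T+1))
          ≤ ∑' (y : St N), P (cyl (Function.update π (s+1) y) (s+1) ∩ hitSet i L (s+1) T) :=
            le_trans (measure_mono cover) (measure_iUnion_le _)
        _ ≤ ∑' (y : St N),
            ENNReal.ofReal (queueKernel lam mu (π s) y * hitp lam mu i L T y) * P (cyl π s) := by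
            apply ENNReal.tsum_le_tsum
            intro y
            have h1 := ih (s+1) (Function.update π (s+1) y)
            have h2 : (Function.update π (s+1) y) (s+1) = y := Function.update_self _ _ _
            rw [h2] at h1
            have h3 : P (cyl (Function.update π (s+1) y) (s+1)) =
                ENNReal.ofReal (queueKernel lam mu (π s) y) * P (cyl π s) := by
              have h4 := chain_step hchain (Function.update π (s+1) y) s
              have h5 : cyl (Function.update π (s+1) y) s = cyl π s :=
                cyl_congr fun u hu => Function.update_of_ne (by omega) _ _
              have h6 : (Function.update π (s+1) y) s = π s :=
                Function.update_of_ne (by omega) _ _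
              rw [h5, h6, h2] at h4
              exact h4
            calc P (cyl (Function.update π (s+1) y) (s+1) ∩ hitSet i L (s+1) T)
                ≤ ENNReal.ofReal (hitp lam mu i L T y) *
                    (ENNReal.ofReal (queueKernel lam mu (π s) y) * P (cyl π s)) := by
                  rw [← h3]; exact h1
              _ = ENNReal.ofReal (queueKernel lam mu (π s) y * hitp lam mu i L T y) *
                    P (cyl π s) := by
                  rw [ENNReal.ofReal_mul (kernel_nonneg hlam hmu i _ _)]; ring
        _ = (∑ y ∈ nbrs (π s),
              ENNReal.ofReal (queueKernel lam mu (π s) y * hitp lam mu i L T y)) *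
              P (cyl π s) := by
            rw [ENNReal.tsum_mul_right]
            congr 1
            apply tsum_eq_sum
            intro y hy
            rw [kernel_eq_zero lam mu _ hy, zero_mul, ENNReal.ofReal_zero]
        _ = ENNReal.ofReal (hitp lam mu i L (T+1) (π s)) * P (cyl π s) := by
            congr 1
            rw [← ENNReal.ofReal_sum_of_nonneg (fun y _ =>
              mul_nonneg (kernel_nonneg hlam hmu i _ _) (hitp_nonneg lam mu i L hlam hmu T y))]
            congr 1
            rw [kernel_sum lam mu (π s) (hitp lam mu i L T), hitp_succ, if_neg h]

lemma measure_hitAfter {lam : Fin N → ℝ} {mu : Fin N → (Fin N → ℕ) → ℝ}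
    (hlam : ∀ j, 0 < lam j) (hmu : ∀ j x, 0 < mu j x)
    {P : Measure (ℕ → St N)} (hchain : IsQueueChain lam mu P)
    (i : Fin N) (L : ℕ)
    {ρ : ℝ} (hρ0 : 0 < ρ) (hρ1 : ρ < 1)
    (hthr : ∀ x : St N, L < x i → mu i x ≤ ρ * lam i)
    (s : ℕ) (π : ℕ → St N) :
    P (cyl π s ∩ hitAfter i L s) ≤
      ENNReal.ofReal (ρ ^ (π s i - L)) * P (cyl π s) := by
  have hU : cyl π s ∩ hitAfter i L s = ⋃ (T : ℕ), (cyl π s ∩ hitSet i L s T) := by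
    ext ω
    simp only [Set.mem_inter_iff, Set.mem_iUnion, hitAfter, hitSet, Set.mem_setOf_eq]
    constructor
    · rintro ⟨hc, u, hu1, hu2⟩
      exact ⟨u - s, hc, u, hu1, by omega, hu2⟩
    · rintro ⟨T, hc, u, hu1, _, hu2⟩
      exact ⟨hc, u, hu1, hu2⟩
  rw [hU, Directed.measure_iUnion]
  · apply iSup_le
    intro T
    calc P (cyl π s ∩ hitSet i L s T)
        ≤ ENNReal.ofReal (hitp lam mu i L T (π s)) * P (cyl π s) :=
          measure_hit hlam hmu hchain i L T s π
      _ ≤ ENNReal.ofReal (ρ ^ (π s i - L)) * P (cyl π s) := by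
          apply mul_le_mul_left
          exact ENNReal.ofReal_le_ofReal (hitp_le lam mu i L hlam hmu hρ0 hρ1 hthr T (π s))
  · intro a b
    rcases Nat.le_total a b with h | h
    · exact ⟨b, by
        refine ⟨Set.inter_subset_inter_right _ ?_, le_rfl⟩
        rintro ω ⟨u, h1, h2, h3⟩; exact ⟨u, h1, by omega, h3⟩⟩
    · exact ⟨a, le_rfl, by
        rintro ω ⟨hc, u, h1, h2, h3⟩; exact ⟨hc, u, h1, by omega, h3⟩⟩

def dflt : St N := fun _ => 0

/-- Path extending `π` after time `s` by the list of states `d`. -/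
def ext (π : ℕ → St N) (s : ℕ) (d : List (St N)) : ℕ → St N :=
  fun u => if u ≤ s then π u else d.getD (u - s - 1) dflt

lemma ext_agree (π : ℕ → St N) (s : ℕ) (d : List (St N)) :
    ∀ u ≤ s, ext π s d u = π u := fun u hu => if_pos hu

lemma ext_apply (π : ℕ → St N) (s : ℕ) (d : List (St N)) {u : ℕ} (h : s < u) :
    ext π s d u = d.getD (u - s - 1) dflt := if_neg (by omega)

lemma cyl_ext_eq (π : ℕ → St N) (s : ℕ) (d : List (St N)) :
    cyl (ext π s d) s = cyl π s := cyl_congr (ext_agree π s d)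

lemma cyl_ext_subset (π : ℕ → St N) (s : ℕ) (d : List (St N)) (n : ℕ) :
    cyl (ext π s d) (s + n) ⊆ cyl π s := by
  rw [← cyl_ext_eq π s d]
  exact cyl_antitone _ (Nat.le_add_right s n)

lemma mem_cyl_ext {π : ℕ → St N} {s : ℕ} {d : List (St N)} {ω : ℕ → St N}
    (hω : ω ∈ cyl (ext π s d) (s + d.length)) {m : ℕ} (hm : m < d.length) :
    ω (s + 1 + m) = d.getD m dflt := by
  have h1 := hω (s + 1 + m) (by omega)
  rw [h1, ext_apply π s d (by omega)]
  congr 1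
  omega

/-- Valid first-hit extension: nonempty, all states before the last are above `L`
in coordinate `i`, the last is `≤ L`. -/
def FHvalid (i : Fin N) (L : ℕ) (d : List (St N)) : Prop :=
  0 < d.length ∧ (∀ m, m + 1 < d.length → L < (d.getD m dflt) i) ∧
    (d.getD (d.length - 1) dflt) i ≤ L

lemma ofFn_getD {n : ℕ} (f : Fin n → St N) {m : ℕ} (hm : m < n) :
    (List.ofFn f).getD m dflt = f ⟨m, hm⟩ := by
  rw [List.getD_eq_getElem _ _ (by simpa using hm)]
  simp

lemma FH_cover (π : ℕ → St N) (s : ℕ) (i : Fin N) (L : ℕ) :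
    cyl π s ∩ {ω | ∃ u, s < u ∧ ω u i ≤ L} ⊆
      ⋃ (d : {d : List (St N) // FHvalid i L d}),
        cyl (ext π s d.1) (s + d.1.length) := by
  rintro ω ⟨hc, hex⟩
  have hex' : ∃ u, s < u ∧ ω u i ≤ L := hex
  classical
  set t := Nat.find hex' with ht
  obtain ⟨hts, htlow⟩ := Nat.find_spec hex'
  have hmin : ∀ u < t, ¬(s < u ∧ ω u i ≤ L) := fun u hu => Nat.find_min hex' hu
  set d : List (St N) := List.ofFn (fun m : Fin (t - s) => ω (s + 1 + m)) with hd
  have hlen : d.length = t - s := by simp [hd]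
  have hgetD : ∀ m (hm : m < t - s), d.getD m dflt = ω (s + 1 + m) := by
    intro m hm
    rw [hd, ofFn_getD _ hm]
  have hvalid : FHvalid i L d := by
    refine ⟨by omega, ?_, ?_⟩
    · intro m hm
      rw [hlen] at hm
      rw [hgetD m (by omega)]
      by_contra hle
      exact hmin (s + 1 + m) (by omega) ⟨by omega, by omega⟩
    · rw [hlen, hgetD (t - s - 1) (by omega)]
      have : s + 1 + (t - s - 1) = t := by omega
      rw [this]
      exact htlow
  refine Set.mem_iUnion.2 ⟨⟨d, hvalid⟩, ?_⟩
  intro u hu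
  have hu' : u ≤ s + d.length := hu
  rw [hlen] at hu'
  rcases le_or_gt u s with h1 | h1
  · rw [ext_agree π s d u h1]; exact hc u h1
  · rw [ext_apply π s d h1, hgetD (u - s - 1) (by omega)]
    have he : s + 1 + (u - s - 1) = u := by omega
    rw [he]

/-- if one extension is strictly shorter, the cylinders are disjoint -/
lemma FH_disjoint_aux (π : ℕ → St N) (s : ℕ) (i : Fin N) (L : ℕ)
    {d d' : List (St N)} (h : FHvalid i L d) (h' : FHvalid i L d')
    (hlt : d.length < d'.length) :
    Disjoint (cyl (ext π s d) (s + d.length)) (cyl (ext π s d') (s + d'.length)) := by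
  have hp : 0 < d.length := h.1
  rw [Set.disjoint_left]
  intro ω hω hω'
  have h1 : ω (s + 1 + (d.length - 1)) = d.getD (d.length - 1) dflt :=
    mem_cyl_ext hω (by omega)
  have h2 : ω (s + 1 + (d.length - 1)) = d'.getD (d.length - 1) dflt :=
    mem_cyl_ext hω' (by omega)
  have h3 := h.2.2
  have h4 := h'.2.1 (d.length - 1) (by omega)
  rw [← h1] at h3
  rw [← h2] at h4
  omega

lemma FH_eq_of_mem (π : ℕ → St N) (s : ℕ)
    {d d' : List (St N)} (hlen : d.length = d'.length) {ω : ℕ → St N}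
    (hω : ω ∈ cyl (ext π s d) (s + d.length))
    (hω' : ω ∈ cyl (ext π s d') (s + d'.length)) : d = d' := by
  apply List.ext_getElem hlen
  intro m hm1 hm2
  have e1 : d.getD m dflt = ω (s + 1 + m) := (mem_cyl_ext hω hm1).symm
  have e2 : d'.getD m dflt = ω (s + 1 + m) := (mem_cyl_ext hω' hm2).symm
  rw [List.getD_eq_getElem _ _ hm1] at e1
  rw [List.getD_eq_getElem _ _ hm2] at e2
  rw [e1, e2]

lemma FH_pairwise (π : ℕ → St N) (s : ℕ) (i : Fin N) (L : ℕ) :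
    Pairwise (Disjoint on fun d : {d : List (St N) // FHvalid i L d} =>
      cyl (ext π s d.1) (s + d.1.length)) := by
  rintro ⟨d, hd⟩ ⟨d', hd'⟩ hne
  rcases Nat.lt_trichotomy d.length d'.length with h | h | h
  · exact FH_disjoint_aux π s i L hd hd' h
  · simp only [Function.onFun]
    rw [Set.disjoint_left]
    intro ω hω hω'
    exact hne (by simp only [Subtype.mk.injEq]; exact FH_eq_of_mem π s h hω hω')
  · exact (FH_disjoint_aux π s i L hd' hd h).symm

/-- Decomposition of a cylinder according to the next `K` states. -/
lemma FL_cover (π : ℕ → St N) (s K : ℕ) :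
    cyl π s ⊆ ⋃ (σ : {l : List (St N) // l.length = K}),
      cyl (ext π s σ.1) (s + K) := by
  intro ω hc
  set σ : List (St N) := List.ofFn (fun m : Fin K => ω (s + 1 + m)) with hσ
  have hlen : σ.length = K := by simp [hσ]
  refine Set.mem_iUnion.2 ⟨⟨σ, hlen⟩, ?_⟩
  intro u hu
  rcases le_or_gt u s with h1 | h1
  · rw [ext_agree π s σ u h1]; exact hc u h1
  · rw [ext_apply π s σ h1, hσ, ofFn_getD _ (show u - s - 1 < K by omega)]
    have he : s + 1 + (u - s - 1) = u := by omega
    simp only [Fin.val_mk, he]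

lemma FL_pairwise (π : ℕ → St N) (s K : ℕ) :
    Pairwise (Disjoint on fun σ : {l : List (St N) // l.length = K} =>
      cyl (ext π s σ.1) (s + K)) := by
  rintro ⟨d, hd⟩ ⟨d', hd'⟩ hne
  simp only [Function.onFun]
  rw [Set.disjoint_left]
  intro ω hω hω'
  refine hne ?_
  simp only [Subtype.mk.injEq]
  subst hd
  have hω2 : ω ∈ cyl (ext π s d') (s + d'.length) := by rw [hd']; exact hω'
  exact FH_eq_of_mem π s hd'.symm hω hω2


-- ## new material: the up-run

def upList (x : St N) (i : Fin N) (K : ℕ) : List (St N) :=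
  List.ofFn (fun m : Fin K => Function.update x i (x i + 1 + m))

lemma upList_length (x : St N) (i : Fin N) (K : ℕ) : (upList x i K).length = K := by
  simp [upList]

lemma upList_getD (x : St N) (i : Fin N) (K : ℕ) {m : ℕ} (hm : m < K) :
    (upList x i K).getD m dflt = Function.update x i (x i + 1 + m) := by
  rw [upList, ofFn_getD _ hm]

lemma ext_upList_apply (π : ℕ → St N) (s : ℕ) (i : Fin N) (K : ℕ) {m : ℕ}
    (hm1 : 1 ≤ m) (hm2 : m ≤ K) :
    ext π s (upList (π s) i K) (s + m) = Function.update (π s) i (π s i + m) := by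
  rw [ext_apply π s _ (by omega), upList_getD _ _ _ (show s + m - s - 1 < K by omega)]
  have hval : π s i + 1 + (s + m - s - 1) = π s i + m := by omega
  rw [hval]

lemma ext_upList_level (π : ℕ → St N) (s : ℕ) (i : Fin N) (K : ℕ) :
    (ext π s (upList (π s) i K) (s + K)) i = π s i + K := by
  rcases Nat.eq_zero_or_pos K with h | h
  · subst h
    rw [Nat.add_zero, ext_agree π s _ s le_rfl]
    omega
  · rw [ext_upList_apply π s i K h le_rfl, Function.update_self]

lemma up_run {lam : Fin N → ℝ} {mu : Fin N → (Fin N → ℕ) → ℝ}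
    (hlam : ∀ j, 0 < lam j) (hmu : ∀ j x, 0 < mu j x)
    {B : ℝ} (hB : ∀ j x, mu j x ≤ B) (hB0 : 0 ≤ B)
    {P : Measure (ℕ → St N)} (hchain : IsQueueChain lam mu P)
    (i : Fin N) (π : ℕ → St N) (s : ℕ) :
    ∀ K, (ENNReal.ofReal (lam i / ((∑ j, lam j) + N * B))) ^ K * P (cyl π s) ≤
      P (cyl (ext π s (upList (π s) i K)) (s + K)) := by
  intro K
  induction K with
  | zero => simp [cyl_ext_eq]
  | succ K ihK =>
    have hstep := chain_step hchain (ext π s (upList (π s) i (K+1))) (s + K)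
    have hagree : ∀ u ≤ s + K,
        ext π s (upList (π s) i (K+1)) u = ext π s (upList (π s) i K) u := by
      intro u hu
      rcases le_or_gt u s with h1 | h1
      · rw [ext_agree π s _ u h1, ext_agree π s _ u h1]
      · rw [ext_apply π s _ h1, ext_apply π s _ h1,
          upList_getD _ _ _ (show u - s - 1 < K + 1 by omega),
          upList_getD _ _ _ (show u - s - 1 < K by omega)]
    have hcyl_eq : cyl (ext π s (upList (π s) i (K+1))) (s + K) =
        cyl (ext π s (upList (π s) i K)) (s + K) := cyl_congr hagree
    -- identify the transition as an up-move
    have hz : ext π s (upList (π s) i (K+1)) (s + K + 1) =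
        up (ext π s (upList (π s) i (K+1)) (s + K)) i := by
      rcases Nat.eq_zero_or_pos K with h | h
      · subst h
        rw [show s + 0 + 1 = s + 1 by ring, ext_upList_apply π s i 1 le_rfl le_rfl,
          show s + 0 = s by ring, ext_agree π s _ s le_rfl]
        rfl
      · rw [show s + K + 1 = s + (K+1) by ring,
          ext_upList_apply π s i (K+1) (by omega) le_rfl,
          ext_upList_apply π s i (K+1) (by omega) (by omega)]
        unfold up
        rw [Function.update_self, Function.update_idem]
        have hval : π s i + (K + 1) = π s i + K + 1 := by omega
        rw [hval]
    rw [hz] at hstep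
    rw [kernel_up lam mu _ i] at hstep
    have hge : ENNReal.ofReal (lam i / ((∑ j, lam j) + N * B)) ≤
        ENNReal.ofReal (lam i / normalizer lam mu
          (ext π s (upList (π s) i (K+1)) (s + K))) := by
      apply ENNReal.ofReal_le_ofReal
      exact div_le_div_of_nonneg_left (hlam i).le
        (normalizer_pos lam mu hlam hmu i _) (normalizer_le lam mu hB hB0 _)
    calc (ENNReal.ofReal (lam i / ((∑ j, lam j) + N * B))) ^ (K+1) * P (cyl π s)
        = ENNReal.ofReal (lam i / ((∑ j, lam j) + N * B)) *
          ((ENNReal.ofReal (lam i / ((∑ j, lam j) + N * B))) ^ K * P (cyl π s)) := by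
          ring
      _ ≤ ENNReal.ofReal (lam i / normalizer lam mu
            (ext π s (upList (π s) i (K+1)) (s + K))) *
          P (cyl (ext π s (upList (π s) i K)) (s + K)) :=
          mul_le_mul' hge ihK
      _ = P (cyl (ext π s (upList (π s) i (K+1))) (s + K + 1)) := by
          rw [hstep, hcyl_eq]

-- ## the master induction

def ALset (i : Fin N) (L : ℕ) : Set (ℕ → St N) := {ω | ∀ T, ∃ t, T ≤ t ∧ ω t i ≤ L}

lemma AL_ex {i : Fin N} {L : ℕ} {ω : ℕ → St N} (hω : ω ∈ ALset i L) (s : ℕ) :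
    ∃ u, s < u ∧ ω u i ≤ L := by
  obtain ⟨t, ht1, ht2⟩ := hω (s + 1)
  exact ⟨t, by omega, ht2⟩

lemma ext_end {π : ℕ → St N} {s : ℕ} {i : Fin N} {L : ℕ} {d : List (St N)}
    (h : FHvalid i L d) : (ext π s d (s + d.length)) i ≤ L := by
  have h1 := h.1
  rw [ext_apply π s d (by omega)]
  have : s + d.length - s - 1 = d.length - 1 := by omega
  rw [this]
  exact h.2.2

/-- bound `P(cyl ∩ A)` over first-hit decompositions, given a uniform bound on
low-starting prefixes. -/
lemma FH_bound {P : Measure (ℕ → St N)}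
    (i : Fin N) (L : ℕ) (C : ENNReal)
    (hkey : ∀ (s : ℕ) (π : ℕ → St N), π s i ≤ L →
      P (cyl π s ∩ ALset i L) ≤ C * P (cyl π s))
    (s : ℕ) (π : ℕ → St N) :
    P (cyl π s ∩ ALset i L) ≤ C * P (⋃ (d : {d : List (St N) // FHvalid i L d}),
        cyl (ext π s d.1) (s + d.1.length)) := by
  have hsub : cyl π s ∩ ALset i L ⊆
      ⋃ (d : {d : List (St N) // FHvalid i L d}),
        (cyl (ext π s d.1) (s + d.1.length) ∩ ALset i L) := by
    rintro ω ⟨hc, hA⟩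
    have h1 : ω ∈ cyl π s ∩ {ω | ∃ u, s < u ∧ ω u i ≤ L} := ⟨hc, AL_ex hA s⟩
    obtain ⟨S, ⟨d, rfl⟩, hS⟩ := FH_cover π s i L h1
    exact Set.mem_iUnion.2 ⟨d, hS, hA⟩
  calc P (cyl π s ∩ ALset i L)
      ≤ ∑' (d : {d : List (St N) // FHvalid i L d}),
          P (cyl (ext π s d.1) (s + d.1.length) ∩ ALset i L) :=
        le_trans (measure_mono hsub) (measure_iUnion_le _)
    _ ≤ ∑' (d : {d : List (St N) // FHvalid i L d}),
          C * P (cyl (ext π s d.1) (s + d.1.length)) := by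
        apply ENNReal.tsum_le_tsum
        intro d
        apply hkey
        exact ext_end d.2
    _ = C * ∑' (d : {d : List (St N) // FHvalid i L d}),
          P (cyl (ext π s d.1) (s + d.1.length)) := ENNReal.tsum_mul_left
    _ = C * P (⋃ (d : {d : List (St N) // FHvalid i L d}),
          cyl (ext π s d.1) (s + d.1.length)) := by
        rw [measure_iUnion (FH_pairwise π s i L) (fun d => cyl_measurable _ _)]

lemma master {lam : Fin N → ℝ} {mu : Fin N → (Fin N → ℕ) → ℝ}
    (hlam : ∀ j, 0 < lam j) (hmu : ∀ j x, 0 < mu j x)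
    {B : ℝ} (hB : ∀ j x, mu j x ≤ B) (hB0 : 0 ≤ B)
    {P : Measure (ℕ → St N)} [IsProbabilityMeasure P]
    (hchain : IsQueueChain lam mu P)
    (i : Fin N) (L : ℕ)
    {ρ : ℝ} (hρ0 : 0 < ρ) (hρ1 : ρ < 1)
    (hthr : ∀ x : St N, L < x i → mu i x ≤ ρ * lam i) :
    ∀ (n s : ℕ) (π : ℕ → St N),
      P (cyl π s ∩ ALset i L) ≤
        (ENNReal.ofReal (1 - (1 - ρ) * (lam i / ((∑ j, lam j) + N * B)) ^ (L+1))) ^ n *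
          P (cyl π s) := by
  set a : ℝ := lam i / ((∑ j, lam j) + N * B) with ha_def
  set β : ℝ := 1 - (1 - ρ) * a ^ (L+1) with hβ_def
  have hDm : 0 < (∑ j, lam j) + N * B :=
    lt_of_lt_of_le (normalizer_pos lam mu hlam hmu i dflt) (normalizer_le lam mu hB hB0 dflt)
  have ha0 : 0 < a := div_pos (hlam i) hDm
  have ha1 : a ≤ 1 := by
    rw [ha_def, div_le_one hDm]
    have h1 : lam i ≤ ∑ j, lam j :=
      Finset.single_le_sum (fun j _ => (hlam j).le) (Finset.mem_univ i)
    have h2 : (0:ℝ) ≤ N * B := by positivity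
    linarith
  have haK0 : 0 < a ^ (L+1) := pow_pos ha0 _
  have haK1 : a ^ (L+1) ≤ 1 := pow_le_one₀ ha0.le ha1
  have hβ0 : 0 ≤ β := by nlinarith
  intro n
  induction n with
  | zero =>
    intro s π
    simpa using measure_mono Set.inter_subset_left
  | succ n ih =>
    set KK := L + 1 with hKK
    -- key: the bound for prefixes ending at a low state
    have key : ∀ (s : ℕ) (π : ℕ → St N), π s i ≤ L →
        P (cyl π s ∩ ALset i L) ≤
          (ENNReal.ofReal β) ^ (n+1) * P (cyl π s) := by
      intro s π hlow
      set σ0 : List (St N) := upList (π s) i KK with hσ0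
      set π2 := ext π s σ0 with hπ2
      set s2 := s + KK with hs2
      set Cup := cyl π2 s2 with hCup
      have hσ0len : σ0.length = KK := upList_length (π s) i KK
      have hCup_sub : Cup ⊆ cyl π s := cyl_ext_subset π s σ0 KK
      have hTot_ne : P (cyl π s) ≠ ⊤ := measure_ne_top P _
      have hPu_ne : P Cup ≠ ⊤ := measure_ne_top P _
      have hPuTot : P Cup ≤ P (cyl π s) := measure_mono hCup_sub
      -- split
      have hsplit : P (cyl π s ∩ ALset i L) ≤
          P (Cup ∩ ALset i L) + P ((cyl π s \ Cup) ∩ ALset i L) := by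
        refine le_trans (measure_mono ?_) (measure_union_le _ _)
        rintro ω ⟨hc, hA⟩
        by_cases h : ω ∈ Cup
        · exact Or.inl ⟨h, hA⟩
        · exact Or.inr ⟨⟨hc, h⟩, hA⟩
      -- bound on the escape branch
      have boundA : P (Cup ∩ ALset i L) ≤
          (ENNReal.ofReal β) ^ n * (ENNReal.ofReal ρ * P Cup) := by
        have h1 := FH_bound i L ((ENNReal.ofReal β) ^ n) (fun s' π' _ => ih s' π') s2 π2
        refine le_trans h1 ?_
        apply mul_le_mul_right
        have h2 : (⋃ (d : {d : List (St N) // FHvalid i L d}),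
            cyl (ext π2 s2 d.1) (s2 + d.1.length)) ⊆ cyl π2 s2 ∩ hitAfter i L s2 := by
          intro ω hω
          obtain ⟨S, ⟨d, rfl⟩, hS⟩ := hω
          refine ⟨cyl_ext_subset π2 s2 d.1 d.1.length hS, ?_⟩
          refine ⟨s2 + d.1.length, by omega, ?_⟩
          rw [hS (s2 + d.1.length) le_rfl]
          exact ext_end d.2
        refine le_trans (measure_mono h2) ?_
        refine le_trans (measure_hitAfter hlam hmu hchain i L hρ0 hρ1 hthr s2 π2) ?_
        apply mul_le_mul_left
        apply ENNReal.ofReal_le_ofReal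
        have hlev : π2 s2 i = π s i + KK := ext_upList_level π s i KK
        rw [hlev]
        have hexp : π s i + KK - L = π s i + 1 := by omega
        rw [hexp]
        calc ρ ^ (π s i + 1) ≤ ρ ^ 1 :=
              pow_le_pow_of_le_one hρ0.le hρ1.le (by omega)
          _ = ρ := pow_one ρ
      -- bound on the failure branch
      have boundB : P ((cyl π s \ Cup) ∩ ALset i L) ≤
          (ENNReal.ofReal β) ^ n * P (cyl π s \ Cup) := by
        set e0 : {l : List (St N) // l.length = KK} := ⟨σ0, hσ0len⟩ with he0
        have hU : cyl π s \ Cup =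
            ⋃ (σ : {σ : {l : List (St N) // l.length = KK} // σ ≠ e0}),
              cyl (ext π s σ.1.1) (s + KK) := by
          ext ω
          constructor
          · rintro ⟨hc, hnc⟩
            obtain ⟨S, ⟨σ, rfl⟩, hS⟩ := FL_cover π s KK hc
            refine Set.mem_iUnion.2 ⟨⟨σ, ?_⟩, hS⟩
            intro he
            subst he
            exact hnc hS
          · intro hω
            obtain ⟨S, ⟨σ, rfl⟩, hS⟩ := hω
            refine ⟨cyl_ext_subset π s σ.1.1 KK hS, ?_⟩
            intro hco
            have hdisj := FL_pairwise π s KK (show σ.1 ≠ e0 from σ.2)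
            exact Set.disjoint_left.1 hdisj hS hco
        rw [hU]
        have hpair : Pairwise (Disjoint on fun σ : {σ : {l : List (St N) // l.length = KK} // σ ≠ e0} =>
            cyl (ext π s σ.1.1) (s + KK)) := by
          intro σ τ hne
          exact FL_pairwise π s KK (Subtype.coe_injective.ne hne)
        calc P ((⋃ (σ : {σ : {l : List (St N) // l.length = KK} // σ ≠ e0}),
              cyl (ext π s σ.1.1) (s + KK)) ∩ ALset i L)
            ≤ ∑' (σ : {σ : {l : List (St N) // l.length = KK} // σ ≠ e0}),
                P (cyl (ext π s σ.1.1) (s + KK) ∩ ALset i L) := by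
              refine le_trans (measure_mono ?_) (measure_iUnion_le _)
              rintro ω ⟨hω, hA⟩
              obtain ⟨S, ⟨σ, rfl⟩, hS⟩ := hω
              exact Set.mem_iUnion.2 ⟨σ, hS, hA⟩
          _ ≤ ∑' (σ : {σ : {l : List (St N) // l.length = KK} // σ ≠ e0}),
                (ENNReal.ofReal β) ^ n * P (cyl (ext π s σ.1.1) (s + KK)) := by
              apply ENNReal.tsum_le_tsum
              intro σ
              exact ih (s + KK) (ext π s σ.1.1)
          _ = (ENNReal.ofReal β) ^ n * ∑' (σ : {σ : {l : List (St N) // l.length = KK} // σ ≠ e0}),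
                P (cyl (ext π s σ.1.1) (s + KK)) := ENNReal.tsum_mul_left
          _ = (ENNReal.ofReal β) ^ n * P (⋃ (σ : {σ : {l : List (St N) // l.length = KK} // σ ≠ e0}),
                cyl (ext π s σ.1.1) (s + KK)) := by
              rw [measure_iUnion hpair (fun σ => cyl_measurable _ _)]
      -- the probability of the up-run
      have hrun : ENNReal.ofReal (a ^ KK) * P (cyl π s) ≤ P Cup := by
        have h1 := up_run hlam hmu hB hB0 hchain i π s KK
        rw [ENNReal.ofReal_pow ha0.le]
        exact h1
      -- the arithmetic
      have harith : ENNReal.ofReal ρ * P Cup + (P (cyl π s) - P Cup) ≤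
          ENNReal.ofReal β * P (cyl π s) := by
        have hX_ne : ENNReal.ofReal ρ * P Cup + (P (cyl π s) - P Cup) ≠ ⊤ := by
          apply ENNReal.add_ne_top.2
          constructor
          · exact ENNReal.mul_ne_top ENNReal.ofReal_ne_top hPu_ne
          · exact (tsub_le_self.trans_lt (lt_top_iff_ne_top.2 hTot_ne)).ne
        have hY_ne : ENNReal.ofReal β * P (cyl π s) ≠ ⊤ :=
          ENNReal.mul_ne_top ENNReal.ofReal_ne_top hTot_ne
        rw [← ENNReal.toReal_le_toReal hX_ne hY_ne]
        rw [ENNReal.toReal_add (ENNReal.mul_ne_top ENNReal.ofReal_ne_top hPu_ne)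
          ((tsub_le_self.trans_lt (lt_top_iff_ne_top.2 hTot_ne)).ne),
          ENNReal.toReal_mul, ENNReal.toReal_mul,
          ENNReal.toReal_ofReal hρ0.le, ENNReal.toReal_ofReal hβ0,
          ENNReal.toReal_sub_of_le hPuTot hTot_ne]
        set pu := (P Cup).toReal
        set tot := (P (cyl π s)).toReal
        have hpu0 : 0 ≤ pu := ENNReal.toReal_nonneg
        have htot0 : 0 ≤ tot := ENNReal.toReal_nonneg
        have hputot : pu ≤ tot := ENNReal.toReal_mono hTot_ne hPuTot
        have hrun' : a ^ KK * tot ≤ pu := by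
          have := ENNReal.toReal_mono hPu_ne hrun
          rwa [ENNReal.toReal_mul, ENNReal.toReal_ofReal haK0.le] at this
        have hKKL : a ^ KK = a ^ (L+1) := by rw [hKK]
        rw [hKKL] at hrun'
        nlinarith [mul_nonneg (sub_nonneg.2 hρ1.le) (sub_nonneg.2 hrun')]
      -- assemble
      have hdiff : P (cyl π s \ Cup) = P (cyl π s) - P Cup :=
        measure_diff hCup_sub (cyl_measurable _ _).nullMeasurableSet hPu_ne
      calc P (cyl π s ∩ ALset i L)
          ≤ P (Cup ∩ ALset i L) + P ((cyl π s \ Cup) ∩ ALset i L) := hsplit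
        _ ≤ (ENNReal.ofReal β) ^ n * (ENNReal.ofReal ρ * P Cup) +
            (ENNReal.ofReal β) ^ n * P (cyl π s \ Cup) := add_le_add boundA boundB
        _ = (ENNReal.ofReal β) ^ n *
            (ENNReal.ofReal ρ * P Cup + (P (cyl π s) - P Cup)) := by
            rw [hdiff, mul_add]
        _ ≤ (ENNReal.ofReal β) ^ n * (ENNReal.ofReal β * P (cyl π s)) :=
            mul_le_mul_right harith _
        _ = (ENNReal.ofReal β) ^ (n+1) * P (cyl π s) := by
            rw [pow_succ]
            ring
    -- general prefixes via first-hit decomposition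
    intro s π
    refine le_trans (FH_bound i L ((ENNReal.ofReal β) ^ (n+1)) key s π) ?_
    apply mul_le_mul_right
    apply measure_mono
    apply Set.iUnion_subset
    intro d
    exact cyl_ext_subset π s d.1 d.1.length

-- ## final assembly

lemma AL_null {lam : Fin N → ℝ} {mu : Fin N → (Fin N → ℕ) → ℝ}
    (hlam : ∀ j, 0 < lam j) (hmu : ∀ j x, 0 < mu j x)
    {B : ℝ} (hB : ∀ j x, mu j x ≤ B) (hB0 : 0 ≤ B)
    {P : Measure (ℕ → St N)} [IsProbabilityMeasure P]
    (hchain : IsQueueChain lam mu P)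
    (i : Fin N) (L : ℕ)
    {ρ : ℝ} (hρ0 : 0 < ρ) (hρ1 : ρ < 1)
    (hthr : ∀ x : St N, L < x i → mu i x ≤ ρ * lam i) :
    P (ALset i L) = 0 := by
  set a : ℝ := lam i / ((∑ j, lam j) + N * B) with ha_def
  set β : ℝ := 1 - (1 - ρ) * a ^ (L+1) with hβ_def
  have hDm : 0 < (∑ j, lam j) + N * B := by
    have h1 : 0 < ∑ j, lam j :=
      Finset.sum_pos (fun j _ => hlam j) ⟨i, Finset.mem_univ i⟩
    have h2 : (0:ℝ) ≤ N * B := by positivity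
    linarith
  have ha0 : 0 < a := div_pos (hlam i) hDm
  have hβ1 : β < 1 := by
    have := pow_pos ha0 (L+1)
    nlinarith
  -- for each n, P (ALset i L) ≤ β ^ n
  have hcover : ∀ n : ℕ, P (ALset i L) ≤ (ENNReal.ofReal β) ^ n := by
    intro n
    have h1 : ALset i L ⊆ ⋃ (x : St N), (cyl (fun _ => x) 0 ∩ ALset i L) := by
      intro ω hω
      refine Set.mem_iUnion.2 ⟨ω 0, ?_, hω⟩
      intro u hu
      have : u = 0 := Nat.le_zero.1 hu
      subst this
      rfl
    have hdisj : Pairwise (Disjoint on fun x : St N => cyl (fun _ => x) 0) := by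
      intro x y hxy
      simp only [Function.onFun]
      rw [Set.disjoint_left]
      intro ω hω hω'
      exact hxy ((hω 0 le_rfl).symm.trans (hω' 0 le_rfl))
    calc P (ALset i L)
        ≤ ∑' (x : St N), P (cyl (fun _ => x) 0 ∩ ALset i L) :=
          le_trans (measure_mono h1) (measure_iUnion_le _)
      _ ≤ ∑' (x : St N), (ENNReal.ofReal β) ^ n * P (cyl (fun _ => x) 0) :=
          ENNReal.tsum_le_tsum fun x =>
            master hlam hmu hB hB0 hchain i L hρ0 hρ1 hthr n 0 (fun _ => x)
      _ = (ENNReal.ofReal β) ^ n * ∑' (x : St N), P (cyl (fun _ => x) 0) :=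
          ENNReal.tsum_mul_left
      _ = (ENNReal.ofReal β) ^ n * P (⋃ (x : St N), cyl (fun _ => x) 0) := by
          rw [measure_iUnion hdisj (fun x => cyl_measurable _ _)]
      _ ≤ (ENNReal.ofReal β) ^ n * P Set.univ :=
          mul_le_mul_right (measure_mono (Set.subset_univ _)) _
      _ = (ENNReal.ofReal β) ^ n := by rw [measure_univ, mul_one]
  have hβlt : ENNReal.ofReal β < 1 := ENNReal.ofReal_lt_one.2 hβ1
  have htend : Tendsto (fun n : ℕ => (ENNReal.ofReal β) ^ n) atTop (nhds 0) :=
    ENNReal.tendsto_pow_atTop_nhds_zero_of_lt_one hβlt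
  have hle : P (ALset i L) ≤ 0 := ge_of_tendsto htend (Filter.Eventually.of_forall hcover)
  exact le_antisymm hle (zero_le)

lemma compl_null_one {P : Measure (ℕ → St N)} [IsProbabilityMeasure P]
    {S : Set (ℕ → St N)} (h : P Sᶜ = 0) : P S = 1 := by
  refine le_antisymm (le_trans (measure_mono (Set.subset_univ _)) (le_of_eq measure_univ)) ?_
  calc (1:ENNReal) = P Set.univ := measure_univ.symm
    _ ≤ P (S ∪ Sᶜ) := measure_mono (by rw [Set.union_compl_self])
    _ ≤ P S + P Sᶜ := measure_union_le _ _
    _ = P S := by rw [h, add_zero]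


end QueueAux

open QueueAux

/-- For `N` parallel queues with strictly positive arrival rates
`λ_i` and bounded strictly positive state-dependent service rates `μ_i`, if queue `i`
satisfies `λ_i > limsup_{x_i → ∞} sup_{x_j : j ≠ i} μ_i(x)`, then queue `i` is
unstable: for any initial state (no restriction is placed on the initial
distribution), almost surely `X_i(t) → ∞`; in particular, almost surely there is a
time `T` such that `X_i(t) > 0` for all `t ≥ T`. -/
theorem queue_unstable
    {N : ℕ} (lam : Fin N → ℝ) (hlam : ∀ i, 0 < lam i)
    (mu : Fin N → (Fin N → ℕ) → ℝ)
    (hmu_pos : ∀ i x, 0 < mu i x)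
    (hmu_bdd : ∃ B : ℝ, ∀ i x, mu i x ≤ B)
    (P : Measure (ℕ → Fin N → ℕ)) [IsProbabilityMeasure P]
    (hchain : IsQueueChain lam mu P)
    (i : Fin N)
    (hlimsup : limsup (supAtLevel mu i) atTop < lam i) :
    P {ω | Tendsto (fun t => ω t i) atTop atTop} = 1 ∧
      P {ω | ∃ T : ℕ, ∀ t ≥ T, 0 < ω t i} = 1 := by
  classical
  obtain ⟨B, hB⟩ := hmu_bdd
  have hB0 : 0 ≤ B := le_trans (hmu_pos i (fun _ => 0)).le (hB i _)
  -- nonempty level sets and bounds for the level suprema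
  have hne : ∀ n : ℕ, Nonempty {x : Fin N → ℕ // x i = n} := fun n =>
    ⟨⟨Function.update (fun _ => 0) i n, Function.update_self _ _ _⟩⟩
  have hbddAbove : ∀ n : ℕ,
      BddAbove (Set.range fun x : {x : Fin N → ℕ // x i = n} => mu i x.1) := fun n =>
    ⟨B, by rintro y ⟨x, rfl⟩; exact hB i x.1⟩
  have hsup_le : ∀ n, supAtLevel mu i n ≤ B := fun n => by
    haveI := hne n
    exact ciSup_le fun x => hB i x.1
  have hmu_le_sup : ∀ x : Fin N → ℕ, mu i x ≤ supAtLevel mu i (x i) := fun x =>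
    le_ciSup (hbddAbove (x i)) ⟨x, rfl⟩
  have hbdd : IsBoundedUnder (· ≤ ·) atTop (supAtLevel mu i) :=
    ⟨B, Filter.eventually_map.2 (Filter.Eventually.of_forall hsup_le)⟩
  set ℓ := limsup (supAtLevel mu i) atTop with hℓ
  set c : ℝ := (ℓ + lam i) / 2 with hc
  have hc1 : ℓ < c := by rw [hc]; linarith
  have hc2 : c < lam i := by rw [hc]; linarith
  have hev : ∀ᶠ n in atTop, supAtLevel mu i n < c :=
    Filter.eventually_lt_of_limsup_lt hc1 hbdd
  obtain ⟨n₀, hn₀⟩ := Filter.eventually_atTop.1 hev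
  have hc0 : 0 < c := by
    have h1 := hn₀ n₀ le_rfl
    have h2 := hmu_le_sup (Function.update (fun _ => 0) i n₀)
    rw [Function.update_self] at h2
    have h3 := hmu_pos i (Function.update (fun _ => 0) i n₀)
    linarith
  set ρ : ℝ := c / lam i with hρ
  have hρ0 : 0 < ρ := div_pos hc0 (hlam i)
  have hρ1 : ρ < 1 := (div_lt_one (hlam i)).2 hc2
  have hρc : ρ * lam i = c := div_mul_cancel₀ c (hlam i).ne'
  -- all the tail events are null
  have hAM : ∀ M : ℕ, P (ALset i M) = 0 := by
    intro M
    set L := max M n₀ with hL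
    have hthr : ∀ x : Fin N → ℕ, L < x i → mu i x ≤ ρ * lam i := by
      intro x hx
      rw [hρc]
      calc mu i x ≤ supAtLevel mu i (x i) := hmu_le_sup x
        _ ≤ c := (hn₀ (x i) (by omega)).le
    have hnull : P (ALset i L) = 0 :=
      AL_null hlam hmu_pos hB hB0 hchain i L hρ0 hρ1 hthr
    refine measure_mono_null ?_ hnull
    intro ω hω
    intro T
    obtain ⟨t, ht1, ht2⟩ := hω T
    exact ⟨t, ht1, by omega⟩
  constructor
  · -- tendsto
    apply compl_null_one
    refine measure_mono_null ?_ (show P (⋃ M : ℕ, ALset i M) = 0 from ?_)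
    · intro ω hω
      simp only [Set.mem_compl_iff, Set.mem_setOf_eq] at hω
      rw [Filter.tendsto_atTop_atTop] at hω
      push_neg at hω
      obtain ⟨b, hb⟩ := hω
      refine Set.mem_iUnion.2 ⟨b, ?_⟩
      intro T
      obtain ⟨t, ht1, ht2⟩ := hb T
      exact ⟨t, ht1, by omega⟩
    · refine le_antisymm (le_trans (measure_iUnion_le _) ?_) (zero_le)
      simp [hAM]
  · -- eventually positive
    apply compl_null_one
    refine measure_mono_null ?_ (hAM 0)
    intro ω hω
    simp only [Set.mem_compl_iff, Set.mem_setOf_eq] at hω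
    push_neg at hω
    intro T
    obtain ⟨t, ht1, ht2⟩ := hω T
    exact ⟨t, ht1, by omega⟩
end
end
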